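/- arXiv:2202.06618 — 2 statements merged into one kernel-verified Lean document; each statement's English description precedes it below -/
import Mathlib

section
/- Fix d ∈ ℕ and L > 0, and let p ∈ 𝒫_L with p_max, C₁, C₂, K_max all finite. For each N, let X₁,…,X_N be i.i.d. samples from p and X'₁,…,X'_{M(N)} i.i.d. samples from p independent of the former, and let Ĥ(𝒟; w) = −(1/N) Σ_{n=1}^N log p̂(X_n; w) be the plug-in entropy estimate based on the Parzen–Rosenblatt estimator p̂(x; w) = (1/(M wᵈ)) Σ_{m=1}^M κ((x − X'_m)/w). If the bandwidths w = w(N) → 0 and sample sizes M = M(N) → ∞ are chosen so that N·w(N) → 0 and N² log N/(w(N)^{2d} M(N)) → 0 as N → ∞, then |Ĥ(𝒟; w(N)) − h(X)| → 0 in probability; i.e., for every δ > 0 and ε > 0 there exists N₀ such that for all N ≥ N₀, Pr(|Ĥ(𝒟; w(N)) − h(X)| > ε) ≤ δ. -/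
open MeasureTheory ProbabilityTheory Filter

/-- The Parzen–Rosenblatt kernel density estimator
`p̂(x; w) = (1/(M wᵈ)) ∑ₘ κ((x - X'ₘ)/w)` built from samples `X'₁, …, X'_M`. -/
noncomputable def parzen {Ω : Type} {d M : ℕ} (w : ℝ) (κ : (Fin d → ℝ) → ℝ)
    (X' : Fin M → Ω → (Fin d → ℝ)) (x : Fin d → ℝ) (ω : Ω) : ℝ :=
  (1 / ((M : ℝ) * w ^ d)) * ∑ m, κ (w⁻¹ • (x - X' m ω))

/-- The plug-in entropy estimate `Ĥ(𝒟; w) = -(1/N) ∑ₙ log p̂(Xₙ; w)`. -/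
noncomputable def entropyEstimate {Ω : Type} {d N M : ℕ} (w : ℝ) (κ : (Fin d → ℝ) → ℝ)
    (X : Fin N → Ω → (Fin d → ℝ)) (X' : Fin M → Ω → (Fin d → ℝ)) (ω : Ω) : ℝ :=
  -(1 / (N : ℝ)) * ∑ n, Real.log (parzen w κ X' (X n ω) ω)

section KnifeAux

open MeasureTheory ProbabilityTheory Filter

lemma knife_cv_shift {d : ℕ} (φ : (Fin d → ℝ) → ℝ) (x : Fin d → ℝ) {w : ℝ} (hw : 0 < w) :
    ∫ y, φ y = w ^ d * ∫ u, φ (x - w • u) := by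
  have h1 := Measure.integral_comp_smul (volume : Measure (Fin d → ℝ)) (fun z => φ (x - z)) w
  simp only [Module.finrank_fin_fun] at h1
  rw [integral_sub_left_eq_self φ volume x] at h1
  rw [h1, abs_of_nonneg (inv_nonneg.2 (pow_nonneg hw.le _)), smul_eq_mul, ← mul_assoc,
    mul_inv_cancel₀ (pow_ne_zero _ hw.ne'), one_mul]

lemma knife_integrable_of_bounded_support {d : ℕ} {f : (Fin d → ℝ) → ℝ}
    (hf : Measurable f) (h0 : ∀ x, 0 ≤ f x) {C : ℝ}
    (hsupp : ∀ x, x ∉ Set.Icc (0 : Fin d → ℝ) 1 → f x = 0) (hC : ∀ x, f x ≤ C) :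
    Integrable f := by
  have hmeas : MeasurableSet (Set.Icc (0 : Fin d → ℝ) 1) := measurableSet_Icc
  refine Integrable.mono' (g := Set.indicator (Set.Icc (0 : Fin d → ℝ) 1) (fun _ => C)) ?_
    hf.aestronglyMeasurable (Filter.Eventually.of_forall fun x => ?_)
  · exact (IntegrableOn.integrable_indicator
      (integrableOn_const (IsCompact.measure_lt_top isCompact_Icc).ne) hmeas)
  · rw [Real.norm_eq_abs, abs_of_nonneg (h0 x)]
    by_cases hx : x ∈ Set.Icc (0 : Fin d → ℝ) 1
    · rw [Set.indicator_of_mem hx]; exact hC x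
    · rw [Set.indicator_of_notMem hx, hsupp x hx]

lemma knife_le_of_isGreatest {d : ℕ} {p : (Fin d → ℝ) → ℝ} {pmax : ℝ} (h0 : ∀ x, 0 ≤ p x)
    (hsupp : ∀ x, x ∉ Set.Icc (0 : Fin d → ℝ) 1 → p x = 0)
    (hg : IsGreatest (p '' Set.Icc (0 : Fin d → ℝ) 1) pmax) : ∀ x, p x ≤ pmax := by
  intro x
  by_cases hx : x ∈ Set.Icc (0 : Fin d → ℝ) 1
  · exact hg.2 ⟨x, hx, rfl⟩
  · rw [hsupp x hx]
    obtain ⟨y, hy, hyv⟩ := hg.1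
    exact le_trans (h0 y) (hyv ▸ hg.2 ⟨y, hy, rfl⟩)

lemma knife_max_nonneg {d : ℕ} {p : (Fin d → ℝ) → ℝ} {pmax : ℝ} (h0 : ∀ x, 0 ≤ p x)
    (hg : IsGreatest (p '' Set.Icc (0 : Fin d → ℝ) 1) pmax) : 0 ≤ pmax := by
  obtain ⟨y, hy, hyv⟩ := hg.1
  exact le_trans (h0 y) (le_of_eq hyv)

lemma knife_integrable_p {d : ℕ} {p : (Fin d → ℝ) → ℝ} (hpint : ∫ x, p x = 1) :
    Integrable p := by
  by_contra h
  rw [integral_undef h] at hpint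
  norm_num at hpint

noncomputable def knifeQ {d : ℕ} (p κ : (Fin d → ℝ) → ℝ) (w : ℝ) (x : Fin d → ℝ) : ℝ :=
  ∫ u, κ u * p (x - w • u)

section QDef
variable {d : ℕ} {p κ : (Fin d → ℝ) → ℝ} {w : ℝ}
variable (hp0 : ∀ x, 0 ≤ p x) (hpmeas : Measurable p)
  (hκ0 : ∀ x, 0 ≤ κ x) (hκmeas : Measurable κ) {pmax Kmax : ℝ}
  (hple : ∀ x, p x ≤ pmax) (hκint : Integrable κ)

include hκ0 hp0 hκmeas hpmeas hple hκint in
lemma knifeQ_integrand_integrable (x : Fin d → ℝ) :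
    Integrable (fun u => κ u * p (x - w • u)) := by
  refine Integrable.mono' (hκint.const_mul pmax) ?_ (.of_forall fun u => ?_)
  · exact (hκmeas.mul (hpmeas.comp (by fun_prop))).aestronglyMeasurable
  · rw [Real.norm_eq_abs, abs_of_nonneg (mul_nonneg (hκ0 u) (hp0 _)), mul_comm pmax]
    exact mul_le_mul_of_nonneg_left (hple _) (hκ0 u)

include hκ0 hp0 hκmeas hpmeas hple hκint in
lemma knifeQ_le_pmax (hκint1 : ∫ u, κ u = 1) (x : Fin d → ℝ) : knifeQ p κ w x ≤ pmax := by
  have h1 : knifeQ p κ w x ≤ ∫ u, κ u * pmax :=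
    integral_mono (knifeQ_integrand_integrable hp0 hpmeas hκ0 hκmeas hple hκint x)
      (hκint.mul_const pmax) fun u => mul_le_mul_of_nonneg_left (hple _) (hκ0 u)
  calc knifeQ p κ w x ≤ ∫ u, κ u * pmax := h1
    _ = (∫ u, κ u) * pmax := by rw [integral_mul_const]
    _ = pmax := by rw [hκint1, one_mul]

include hp0 hκ0 in
lemma knifeQ_nonneg (x : Fin d → ℝ) : 0 ≤ knifeQ p κ w x :=
  integral_nonneg fun u => mul_nonneg (hκ0 u) (hp0 _)

include hpmeas hκmeas in
lemma knifeQ_measurable : Measurable (knifeQ p κ w) := by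
  have h : StronglyMeasurable (fun z : (Fin d → ℝ) × (Fin d → ℝ) => κ z.2 * p (z.1 - w • z.2)) :=
    (hκmeas.comp measurable_snd |>.mul (hpmeas.comp (by fun_prop))).stronglyMeasurable
  exact h.integral_prod_right'.measurable

end QDef

section Bias
variable {d : ℕ} {p κ : (Fin d → ℝ) → ℝ} {w L : ℝ}
variable (hp0 : ∀ x, 0 ≤ p x) (hpmeas : Measurable p)
  (hκ0 : ∀ x, 0 ≤ κ x) (hκmeas : Measurable κ) {pmax : ℝ}
  (hple : ∀ x, p x ≤ pmax) (hκint : Integrable κ) (hw : 0 < w)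

include hp0 hpmeas hκ0 hκmeas hple hκint hw in
lemma knifeQ_bias (hκint1 : ∫ u, κ u = 1)
    (hLip : ∀ x y, |p x - p y| ≤ L * ∑ k, |x k - y k|)
    (hC₂int : Integrable fun u => (∑ k, |u k|) * κ u) (x : Fin d → ℝ) :
    |knifeQ p κ w x - p x| ≤ (L * ∫ u, (∑ k, |u k|) * κ u) * w := by
  have hint1 : Integrable (fun u => κ u * p (x - w • u)) :=
    knifeQ_integrand_integrable hp0 hpmeas hκ0 hκmeas hple hκint x
  have hpx : p x = ∫ u, κ u * p x := by
    rw [integral_mul_const, hκint1, one_mul]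
  have hsub : knifeQ p κ w x - p x = ∫ u, (κ u * p (x - w • u) - κ u * p x) := by
    rw [integral_sub hint1 (hκint.mul_const _), knifeQ, ← hpx]
  rw [hsub, ← Real.norm_eq_abs]
  have hgint : Integrable (fun u => L * w * ((∑ k, |u k|) * κ u)) := hC₂int.const_mul _
  refine (norm_integral_le_of_norm_le hgint (Filter.Eventually.of_forall fun u => ?_)).trans ?_
  swap
  · rw [integral_const_mul]
    exact le_of_eq (by ring)
  · rw [Real.norm_eq_abs, ← mul_sub, abs_mul, abs_of_nonneg (hκ0 u)]
    have h2 := hLip (x - w • u) x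
    have h3 : ∀ k, |(x - w • u) k - x k| = w * |u k| := by
      intro k
      simp [abs_mul, abs_of_nonneg hw.le, Pi.smul_apply, smul_eq_mul]
    calc κ u * |p (x - w • u) - p x| ≤ κ u * (L * ∑ k, |(x - w • u) k - x k|) :=
          mul_le_mul_of_nonneg_left (h2) (hκ0 u)
      _ = L * w * ((∑ k, |u k|) * κ u) := by
          simp only [h3, ← Finset.mul_sum]
          ring
end Bias

section Mean
variable {d : ℕ} {p κ : (Fin d → ℝ) → ℝ} {w : ℝ} (hw : 0 < w)

include hw in
lemma knife_mean (x : Fin d → ℝ) :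
    ∫ y, κ (w⁻¹ • (x - y)) * p y = w ^ d * knifeQ p κ w x := by
  have h := knife_cv_shift (fun y => κ (w⁻¹ • (x - y)) * p y) x hw
  rw [h, knifeQ]
  congr 1
  refine integral_congr_ae (Filter.Eventually.of_forall fun u => ?_)
  simp only [sub_sub_cancel, inv_smul_smul₀ hw.ne']

include hw in
lemma knife_mean_sq (x : Fin d → ℝ) :
    ∫ y, κ (w⁻¹ • (x - y)) ^ 2 * p y = w ^ d * ∫ u, κ u ^ 2 * p (x - w • u) := by
  have h := knife_cv_shift (fun y => κ (w⁻¹ • (x - y)) ^ 2 * p y) x hw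
  rw [h]
  congr 1
  refine integral_congr_ae (Filter.Eventually.of_forall fun u => ?_)
  simp only [sub_sub_cancel, inv_smul_smul₀ hw.ne']
end Mean

section Law
variable {d : ℕ} {p : (Fin d → ℝ) → ℝ} {Ω : Type} [MeasurableSpace Ω] {μ : Measure Ω}
  {Y : Ω → (Fin d → ℝ)}
variable (hY : Measurable Y)
  (hlaw : Measure.map Y μ = volume.withDensity fun x => ENNReal.ofReal (p x))
  (hp0 : ∀ x, 0 ≤ p x) (hpmeas : Measurable p)

include hY hlaw hp0 hpmeas in
lemma knife_integral_law (g : (Fin d → ℝ) → ℝ) (hg : Measurable g) :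
    ∫ ω, g (Y ω) ∂μ = ∫ y, p y * g y := by
  rw [← integral_map hY.aemeasurable hg.aestronglyMeasurable, hlaw]
  have h1 : (fun x => ENNReal.ofReal (p x))
      = fun x => ((Real.toNNReal (p x) : NNReal) : ENNReal) := rfl
  rw [h1, integral_withDensity_eq_integral_smul hpmeas.real_toNNReal g]
  refine integral_congr_ae (Filter.Eventually.of_forall fun y => ?_)
  show (p y).toNNReal • g y = p y * g y
  rw [NNReal.smul_def, smul_eq_mul, Real.coe_toNNReal _ (hp0 y)]

include hY hlaw hp0 in
lemma knife_law_apply {A : Set (Fin d → ℝ)} (hA : MeasurableSet A) (hpint : Integrable p) :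
    μ (Y ⁻¹' A) = ENNReal.ofReal (∫ x in A, p x) := by
  rw [← Measure.map_apply hY hA, hlaw, withDensity_apply _ hA,
    ofReal_integral_eq_lintegral_ofReal hpint.restrict
      (Filter.Eventually.of_forall fun y => hp0 y)]
end Law

end KnifeAux

section KnifeAux2

open MeasureTheory ProbabilityTheory Filter

lemma knife_cheb_x {d : ℕ} {p κ : (Fin d → ℝ) → ℝ} {pmax Kmax w : ℝ}
    (hp0 : ∀ x, 0 ≤ p x) (hpmeas : Measurable p)
    (hκ0 : ∀ x, 0 ≤ κ x) (hκmeas : Measurable κ)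
    (hple : ∀ x, p x ≤ pmax) (hκle : ∀ x, κ x ≤ Kmax)
    (hKmax0 : 0 ≤ Kmax) (hw : 0 < w)
    {Ω : Type} [MeasurableSpace Ω] (μ : Measure Ω) [IsProbabilityMeasure μ]
    {Mn : ℕ} (hMn : 0 < Mn) (X' : Fin Mn → Ω → (Fin d → ℝ))
    (hX'meas : ∀ m, Measurable (X' m))
    (hlaw : ∀ m, Measure.map (X' m) μ = volume.withDensity fun x => ENNReal.ofReal (p x))
    (hpair : ∀ m m', m ≠ m' → IndepFun (X' m) (X' m') μ)
    (x : Fin d → ℝ) {t : ℝ} (ht : 0 < t)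
    (hQle : knifeQ p κ w x ≤ pmax) (hQ0 : 0 ≤ knifeQ p κ w x)
    (hQint : Integrable fun u => κ u * p (x - w • u)) :
    μ {ω | t ≤ |parzen w κ X' x ω - knifeQ p κ w x|}
      ≤ ENNReal.ofReal (Kmax * pmax / (Mn * w ^ d * t ^ 2)) := by
  classical
  set g : (Fin d → ℝ) → ℝ := fun v => κ (w⁻¹ • (x - v)) with hg
  have hgmeas : Measurable g := hκmeas.comp (by fun_prop)
  set Z : Fin Mn → Ω → ℝ := fun m => g ∘ X' m with hZ
  have hZmeas : ∀ m, Measurable (Z m) := fun m => hgmeas.comp (hX'meas m)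
  have hZ0 : ∀ m ω, 0 ≤ Z m ω := fun m ω => hκ0 _
  have hZle : ∀ m ω, Z m ω ≤ Kmax := fun m ω => hκle _
  have hZmem : ∀ m, MemLp (Z m) 2 μ := fun m =>
    MemLp.of_bound (hZmeas m).aestronglyMeasurable Kmax
      (.of_forall fun ω => by
        rw [Real.norm_eq_abs, abs_of_nonneg (hZ0 m ω)]; exact hZle m ω)
  have hZint : ∀ m, Integrable (Z m) μ := fun m => (hZmem m).integrable one_le_two
  have hEZ : ∀ m, ∫ ω, Z m ω ∂μ = w ^ d * knifeQ p κ w x := by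
    intro m
    rw [show (fun ω => Z m ω) = fun ω => g (X' m ω) from rfl,
      knife_integral_law (hX'meas m) (hlaw m) hp0 hpmeas g hgmeas, ← knife_mean hw x]
    exact integral_congr_ae (.of_forall fun y => mul_comm _ _)
  -- second moment
  have hEZsq : ∀ m, ∫ ω, Z m ω ^ 2 ∂μ ≤ Kmax * pmax * w ^ d := by
    intro m
    have h1 : ∫ ω, Z m ω ^ 2 ∂μ = ∫ y, p y * g y ^ 2 := by
      rw [show (fun ω => Z m ω ^ 2) = fun ω => (fun v => g v ^ 2) (X' m ω) from rfl,
        knife_integral_law (hX'meas m) (hlaw m) hp0 hpmeas _ (hgmeas.pow_const 2)]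
    have h2 : ∫ y, p y * g y ^ 2 = w ^ d * ∫ u, κ u ^ 2 * p (x - w • u) := by
      rw [← knife_mean_sq hw x]
      exact integral_congr_ae (.of_forall fun y => mul_comm _ _)
    have h3 : ∫ u, κ u ^ 2 * p (x - w • u) ≤ Kmax * knifeQ p κ w x := by
      have hQdef : knifeQ p κ w x = ∫ u, κ u * p (x - w • u) := rfl
      rw [hQdef, ← integral_const_mul]
      refine integral_mono ?_ (hQint.const_mul Kmax) fun u => ?_
      · refine Integrable.mono' (hQint.const_mul Kmax) ?_
          (.of_forall fun u => ?_)
        · exact ((hκmeas.pow_const 2).mul (hpmeas.comp (by fun_prop))).aestronglyMeasurable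
        · rw [Real.norm_eq_abs, abs_of_nonneg (mul_nonneg (sq_nonneg _) (hp0 _))]
          calc κ u ^ 2 * p (x - w • u) ≤ (Kmax * κ u) * p (x - w • u) := by
                refine mul_le_mul_of_nonneg_right ?_ (hp0 _)
                rw [sq]
                exact mul_le_mul_of_nonneg_right (hκle u) (hκ0 u)
            _ = Kmax * (κ u * p (x - w • u)) := by ring
      · calc κ u ^ 2 * p (x - w • u) ≤ (Kmax * κ u) * p (x - w • u) := by
              refine mul_le_mul_of_nonneg_right ?_ (hp0 _)
              rw [sq]
              exact mul_le_mul_of_nonneg_right (hκle u) (hκ0 u)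
          _ = Kmax * (κ u * p (x - w • u)) := by ring
    calc ∫ ω, Z m ω ^ 2 ∂μ = w ^ d * ∫ u, κ u ^ 2 * p (x - w • u) := by rw [h1, h2]
      _ ≤ w ^ d * (Kmax * knifeQ p κ w x) :=
          mul_le_mul_of_nonneg_left h3 (pow_nonneg hw.le _)
      _ ≤ w ^ d * (Kmax * pmax) := by
          exact mul_le_mul_of_nonneg_left (mul_le_mul_of_nonneg_left hQle hKmax0)
            (pow_nonneg hw.le _)
      _ = Kmax * pmax * w ^ d := by ring
  have hvarZ : ∀ m, variance (Z m) μ ≤ Kmax * pmax * w ^ d := by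
    intro m
    refine (variance_le_expectation_sq (hZmeas m).aestronglyMeasurable).trans ?_
    refine le_trans (le_of_eq ?_) (hEZsq m)
    exact integral_congr_ae (.of_forall fun ω => by simp [Pi.pow_apply])
  set T : Ω → ℝ := ∑ m, Z m with hT
  have hTmem : MemLp T 2 μ := memLp_finset_sum' _ fun m _ => hZmem m
  have hTapp : ∀ ω, T ω = ∑ m, Z m ω := fun ω => by simp [hT]
  have hvarT : variance T μ ≤ Mn * (Kmax * pmax * w ^ d) := by
    rw [hT, IndepFun.variance_sum (fun m _ => hZmem m)
      (fun m _ m' hm' hne => (hpair m m' hne).comp hgmeas hgmeas)]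
    calc (∑ m : Fin Mn, variance (Z m) μ) ≤ ∑ m : Fin Mn, Kmax * pmax * w ^ d :=
          Finset.sum_le_sum fun m _ => hvarZ m
      _ = Mn * (Kmax * pmax * w ^ d) := by simp [Finset.sum_const, nsmul_eq_mul]
  have hET : μ[T] = Mn * (w ^ d * knifeQ p κ w x) := by
    rw [hT]
    calc μ[∑ m : Fin Mn, Z m] = ∫ ω, ∑ m : Fin Mn, Z m ω ∂μ := by
          congr 1; ext ω; simp
      _ = ∑ m : Fin Mn, ∫ ω, Z m ω ∂μ := integral_finset_sum _ fun m _ => hZint m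
      _ = ∑ _m : Fin Mn, w ^ d * knifeQ p κ w x :=
          Finset.sum_congr rfl fun m _ => hEZ m
      _ = Mn * (w ^ d * knifeQ p κ w x) := by
          simp [Finset.sum_const, nsmul_eq_mul]
  set c : ℝ := Mn * w ^ d * t with hc
  have hc0 : 0 < c := by positivity
  have hcheb := meas_ge_le_variance_div_sq (μ := μ) hTmem hc0
  have hMnw : (0:ℝ) < Mn * w ^ d := by positivity
  have hincl : {ω | t ≤ |parzen w κ X' x ω - knifeQ p κ w x|}
      ⊆ {ω | c ≤ |T ω - μ[T]|} := by
    intro ω hω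
    simp only [Set.mem_setOf_eq] at hω ⊢
    have hTω : T ω = (Mn * w ^ d) * parzen w κ X' x ω := by
      rw [hTapp, parzen, ← mul_assoc, mul_one_div, div_self hMnw.ne', one_mul]
      rfl
    have hkey : T ω - μ[T] = (Mn * w ^ d) * (parzen w κ X' x ω - knifeQ p κ w x) := by
      rw [hTω, hET]; ring
    rw [hkey, abs_mul, abs_of_nonneg hMnw.le, hc]
    calc Mn * w ^ d * t ≤ Mn * w ^ d * |parzen w κ X' x ω - knifeQ p κ w x| :=
          mul_le_mul_of_nonneg_left hω hMnw.le
      _ = _ := rfl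
  refine (measure_mono hincl).trans (hcheb.trans ?_)
  refine ENNReal.ofReal_le_ofReal ?_
  have he : (Mn * (Kmax * pmax * w ^ d)) / c ^ 2 = Kmax * pmax / (Mn * w ^ d * t ^ 2) := by
    rw [hc]
    have hMn' : (Mn : ℝ) ≠ 0 := Nat.cast_ne_zero.2 hMn.ne'
    field_simp
  calc variance T μ / c ^ 2 ≤ (Mn * (Kmax * pmax * w ^ d)) / c ^ 2 := by gcongr
    _ = _ := he

lemma knife_pair_bound {d Mn : ℕ} {Ω : Type} [MeasurableSpace Ω] (μ : Measure Ω)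
    [IsProbabilityMeasure μ] {Xn : Ω → (Fin d → ℝ)} {V : Ω → (Fin Mn → (Fin d → ℝ))}
    (hXn : Measurable Xn) (hV : Measurable V) (hIndep : IndepFun Xn V μ)
    {C : Set ((Fin d → ℝ) × (Fin Mn → (Fin d → ℝ)))} (hC : MeasurableSet C)
    {B : ENNReal} (hB : ∀ x, μ {ω | (x, V ω) ∈ C} ≤ B) :
    μ {ω | (Xn ω, V ω) ∈ C} ≤ B := by
  haveI := Measure.isProbabilityMeasure_map (μ := μ) hXn.aemeasurable
  haveI := Measure.isProbabilityMeasure_map (μ := μ) hV.aemeasurable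
  have hmap : μ.map (fun ω => (Xn ω, V ω)) = (μ.map Xn).prod (μ.map V) :=
    (indepFun_iff_map_prod_eq_prod_map_map hXn.aemeasurable hV.aemeasurable).1 hIndep
  have h1 : μ {ω | (Xn ω, V ω) ∈ C} = ((μ.map Xn).prod (μ.map V)) C := by
    rw [← hmap, Measure.map_apply (hXn.prodMk hV) hC]
    rfl
  rw [h1, Measure.prod_apply hC]
  have h2 : ∀ x, (μ.map V) (Prod.mk x ⁻¹' C) ≤ B := by
    intro x
    rw [Measure.map_apply hV (measurable_prodMk_left hC)]
    exact hB x
  calc ∫⁻ x, (μ.map V) (Prod.mk x ⁻¹' C) ∂(μ.map Xn) ≤ ∫⁻ _, B ∂(μ.map Xn) :=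
        lintegral_mono h2
    _ = B := by simp

lemma knife_indep_pair {d N Mn : ℕ} {Ω : Type} [MeasurableSpace Ω] {μ : Measure Ω}
    {X : Fin N → Ω → (Fin d → ℝ)} {X' : Fin Mn → Ω → (Fin d → ℝ)}
    (hindep : iIndepFun (Sum.elim X X') μ)
    (hXmeas : ∀ n, Measurable (X n)) (hX'meas : ∀ m, Measurable (X' m)) (n : Fin N) :
    IndepFun (X n) (fun ω m => X' m ω) μ := by
  classical
  have hfmeas : ∀ i, Measurable (Sum.elim X X' i) := by
    rintro (i | i)
    exacts [hXmeas i, hX'meas i]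
  set S : Finset (Fin N ⊕ Fin Mn) := {Sum.inl n} with hS
  set T : Finset (Fin N ⊕ Fin Mn) := Finset.univ.image Sum.inr with hT
  have hST : Disjoint S T := by
    rw [Finset.disjoint_left]
    intro a haS haT
    rw [hS, Finset.mem_singleton] at haS
    rw [hT, Finset.mem_image] at haT
    obtain ⟨m, _, hm⟩ := haT
    rw [haS] at hm
    exact Sum.inr_ne_inl hm
  have h := hindep.indepFun_finset S T hST hfmeas
  have hmem : Sum.inl n ∈ S := Finset.mem_singleton_self _
  have hmem' : ∀ m : Fin Mn, Sum.inr m ∈ T := fun m =>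
    Finset.mem_image_of_mem _ (Finset.mem_univ m)
  exact h.comp (φ := fun g : {i // i ∈ S} → (Fin d → ℝ) => g ⟨Sum.inl n, hmem⟩)
    (ψ := fun g : {i // i ∈ T} → (Fin d → ℝ) => fun m => g ⟨Sum.inr m, hmem' m⟩)
    (measurable_pi_apply _) (measurable_pi_lambda _ fun m => measurable_pi_apply _)

end KnifeAux2

section KnifeAux3
open MeasureTheory ProbabilityTheory Filter

lemma knife_lln {d : ℕ} {p : (Fin d → ℝ) → ℝ}
    (hp0 : ∀ x, 0 ≤ p x) (hpmeas : Measurable p)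
    (hC₁int : Integrable fun x => p x * Real.log (p x) ^ 2)
    {Ω : Type} [MeasurableSpace Ω] (μ : Measure Ω) [IsProbabilityMeasure μ]
    {N : ℕ} (hN : 0 < N) (X : Fin N → Ω → (Fin d → ℝ))
    (hXmeas : ∀ n, Measurable (X n))
    (hlaw : ∀ n, Measure.map (X n) μ = volume.withDensity fun x => ENNReal.ofReal (p x))
    (hpair : ∀ n n', n ≠ n' → IndepFun (X n) (X n') μ)
    {c : ℝ} (hc : 0 < c) :
    μ {ω | c ≤ |(1 / (N:ℝ)) * ∑ n, Real.log (p (X n ω)) - ∫ x, p x * Real.log (p x)|}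
      ≤ ENNReal.ofReal ((∫ x, p x * Real.log (p x) ^ 2) / (N * c ^ 2)) := by
  classical
  set g : (Fin d → ℝ) → ℝ := fun y => Real.log (p y) with hgdef
  have hgmeas : Measurable g := Real.measurable_log.comp hpmeas
  set W : Fin N → Ω → ℝ := fun n => g ∘ X n with hW
  have hWmeas : ∀ n, Measurable (W n) := fun n => hgmeas.comp (hXmeas n)
  -- Memℒp 2
  have hWmem : ∀ n, MemLp (W n) 2 μ := by
    intro n
    have h1 : MemLp g 2 (Measure.map (X n) μ) := by
      rw [hlaw n]
      refine (memLp_two_iff_integrable_sq ?_).2 ?_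
      · exact hgmeas.aestronglyMeasurable
      · rw [integrable_withDensity_iff hpmeas.ennreal_ofReal
          (Filter.Eventually.of_forall fun x => ENNReal.ofReal_lt_top)]
        refine hC₁int.congr (Filter.Eventually.of_forall fun x => ?_)
        simp only [ENNReal.toReal_ofReal (hp0 x)]
        ring
    exact (memLp_map_measure_iff hgmeas.aestronglyMeasurable
      (hXmeas n).aemeasurable).1 h1
  have hWint : ∀ n, Integrable (W n) μ := fun n => (hWmem n).integrable one_le_two
  set I₁ : ℝ := ∫ x, p x * Real.log (p x) with hI₁
  set C₁ : ℝ := ∫ x, p x * Real.log (p x) ^ 2 with hC₁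
  have hEW : ∀ n, ∫ ω, W n ω ∂μ = I₁ :=
    fun n => knife_integral_law (hXmeas n) (hlaw n) hp0 hpmeas g hgmeas
  have hEW2 : ∀ n, ∫ ω, W n ω ^ 2 ∂μ = C₁ := by
    intro n
    rw [show (fun ω => W n ω ^ 2) = (fun y => g y ^ 2) ∘ (X n) from rfl]
    rw [show (∫ ω, ((fun y => g y ^ 2) ∘ (X n)) ω ∂μ)
        = ∫ ω, (fun y => g y ^ 2) (X n ω) ∂μ from rfl,
      knife_integral_law (hXmeas n) (hlaw n) hp0 hpmeas _ (hgmeas.pow_const 2)]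
  have hvarW : ∀ n, variance (W n) μ ≤ C₁ := by
    intro n
    refine (variance_le_expectation_sq (hWmeas n).aestronglyMeasurable).trans ?_
    refine le_trans (le_of_eq ?_) (le_of_eq (hEW2 n))
    exact integral_congr_ae (.of_forall fun ω => by simp [Pi.pow_apply])
  have hC₁0 : 0 ≤ C₁ := le_trans (variance_nonneg (W ⟨0, hN⟩) μ) (hvarW _)
  set T : Ω → ℝ := ∑ n, W n with hT
  have hTmem : MemLp T 2 μ := memLp_finset_sum' _ fun n _ => hWmem n
  have hvarT : variance T μ ≤ N * C₁ := by
    rw [hT, IndepFun.variance_sum (fun n _ => hWmem n)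
      (fun n _ n' hn' hne => (hpair n n' hne).comp hgmeas hgmeas)]
    calc (∑ n : Fin N, variance (W n) μ) ≤ ∑ _n : Fin N, C₁ :=
          Finset.sum_le_sum fun n _ => hvarW n
      _ = N * C₁ := by simp [Finset.sum_const, nsmul_eq_mul]
  have hET : μ[T] = N * I₁ := by
    rw [hT]
    calc μ[∑ n : Fin N, W n] = ∫ ω, ∑ n : Fin N, W n ω ∂μ := by
          congr 1; ext ω; simp
      _ = ∑ n : Fin N, ∫ ω, W n ω ∂μ := integral_finset_sum _ fun n _ => hWint n
      _ = ∑ _n : Fin N, I₁ := Finset.sum_congr rfl fun n _ => hEW n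
      _ = N * I₁ := by simp [Finset.sum_const, nsmul_eq_mul]
  have hc' : (0:ℝ) < N * c := by positivity
  have hcheb := meas_ge_le_variance_div_sq (μ := μ) hTmem hc'
  have hincl : {ω | c ≤ |(1 / (N:ℝ)) * ∑ n, Real.log (p (X n ω)) - I₁|}
      ⊆ {ω | N * c ≤ |T ω - μ[T]|} := by
    intro ω hω
    simp only [Set.mem_setOf_eq] at hω ⊢
    have hN' : (N:ℝ) ≠ 0 := by positivity
    have hTω : T ω = ∑ n, Real.log (p (X n ω)) := by
      rw [hT]; simp [hW, hgdef]
    have key : T ω - μ[T] = N * ((1 / (N:ℝ)) * ∑ n, Real.log (p (X n ω)) - I₁) := by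
      rw [hTω, hET]
      field_simp
    rw [key, abs_mul, abs_of_nonneg (by positivity : (0:ℝ) ≤ (N:ℝ))]
    exact mul_le_mul_of_nonneg_left hω (by positivity)
  refine (measure_mono hincl).trans (hcheb.trans (ENNReal.ofReal_le_ofReal ?_))
  have he : (N * C₁) / (N * c) ^ 2 = C₁ / (N * c ^ 2) := by
    have hN' : (N:ℝ) ≠ 0 := by positivity
    field_simp
  calc variance T μ / (N * c) ^ 2 ≤ (N * C₁) / (N * c) ^ 2 := by gcongr
    _ = C₁ / (N * c ^ 2) := he

lemma knife_tail {d : ℕ} {p : (Fin d → ℝ) → ℝ}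
    (hp0 : ∀ x, 0 ≤ p x) (hpmeas : Measurable p)
    (hpsupp : ∀ x, x ∉ Set.Icc (0 : Fin d → ℝ) 1 → p x = 0) :
    Tendsto (fun N : ℕ => (N : ℝ) * ∫ x in {y | p y < 1 / (N:ℝ)}, p x) atTop (nhds 0) := by
  set F : ℕ → (Fin d → ℝ) → ℝ :=
    fun N => Set.indicator {y | p y < 1 / (N:ℝ)} (fun y => (N:ℝ) * p y) with hF
  have hA : ∀ N : ℕ, MeasurableSet {y : Fin d → ℝ | p y < 1 / (N:ℝ)} :=
    fun N => measurableSet_lt hpmeas measurable_const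
  have key : ∀ N : ℕ, ∫ x, F N x = (N : ℝ) * ∫ x in {y | p y < 1 / (N:ℝ)}, p x := by
    intro N
    simp only [hF]
    rw [integral_indicator (hA N)]
    exact integral_const_mul _ _
  have hbound : Integrable (Set.indicator (Set.Icc (0 : Fin d → ℝ) 1) fun _ => (1:ℝ)) := by
    refine IntegrableOn.integrable_indicator ?_ measurableSet_Icc
    exact integrableOn_const (IsCompact.measure_lt_top isCompact_Icc).ne
  have h0 : Tendsto (fun N : ℕ => ∫ x, F N x) atTop (nhds 0) := by
    have := tendsto_integral_of_dominated_convergence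
        (μ := (volume : Measure (Fin d → ℝ))) (F := F) (f := fun _ => 0)
        (Set.indicator (Set.Icc (0 : Fin d → ℝ) 1) fun _ => (1:ℝ))
        (fun N => ((measurable_const.mul hpmeas).indicator (hA N)).aestronglyMeasurable)
        hbound ?_ ?_
    · simpa using this
    · intro N
      refine Filter.Eventually.of_forall fun x => ?_
      by_cases hx : p x < 1 / (N:ℝ)
      · simp only [hF]
        simp only [Set.indicator_of_mem (show x ∈ {y | p y < 1/(N:ℝ)} from hx)]
        rw [Real.norm_eq_abs,
          abs_of_nonneg (mul_nonneg (Nat.cast_nonneg N) (hp0 x))]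
        by_cases hx2 : x ∈ Set.Icc (0 : Fin d → ℝ) 1
        · rw [Set.indicator_of_mem hx2]
          calc (N:ℝ) * p x ≤ (N:ℝ) * (1 / (N:ℝ)) :=
                mul_le_mul_of_nonneg_left hx.le (Nat.cast_nonneg N)
            _ ≤ 1 := by
                rcases Nat.eq_zero_or_pos N with h | h
                · simp [h]
                · rw [mul_one_div, div_self (by positivity : (N:ℝ) ≠ 0)]
        · rw [hpsupp x hx2, mul_zero, Set.indicator_of_notMem hx2]
      · simp only [hF]
        simp only [Set.indicator_of_notMem (show x ∉ {y | p y < 1/(N:ℝ)} from hx)]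
        rw [norm_zero]
        exact Set.indicator_nonneg (fun _ _ => zero_le_one) x
    · refine Filter.Eventually.of_forall fun x => ?_
      rcases eq_or_lt_of_le (hp0 x) with h | h
      · have : ∀ N : ℕ, F N x = 0 := by
          intro N
          simp only [hF]
          by_cases hx : x ∈ {y | p y < 1 / (N:ℝ)}
          · rw [Set.indicator_of_mem hx, ← h, mul_zero]
          · exact Set.indicator_of_notMem hx _
        rw [show (fun N => F N x) = fun _ => (0:ℝ) from funext this]
        exact tendsto_const_nhds
      · have hev : ∀ᶠ N : ℕ in atTop, F N x = 0 := by
          have h1 : Tendsto (fun N : ℕ => 1 / (N:ℝ)) atTop (nhds 0) :=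
            tendsto_one_div_atTop_nhds_zero_nat
          filter_upwards [h1.eventually_lt_const h] with N hN
          simp only [hF]
          exact Set.indicator_of_notMem (by simpa using hN.le.not_gt) _
        exact Tendsto.congr' (hev.mono fun N h => h.symm) tendsto_const_nhds
  exact h0.congr key

lemma knife_log_diff {a b γ : ℝ} (hb : 0 < b) (hγ0 : 0 ≤ γ) (hγ : γ ≤ 1/4)
    (hab : |a - b| ≤ 2 * γ * b) : |Real.log a - Real.log b| ≤ 4 * γ := by
  have h1 : b / 2 ≤ a := by
    have := abs_le.1 hab
    nlinarith [this.1]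
  have ha0 : 0 < a := lt_of_lt_of_le (by linarith) h1
  have habs := abs_le.1 hab
  rw [abs_le]
  constructor
  · have h2 : Real.log b - Real.log a ≤ b / a - 1 := by
      rw [← Real.log_div hb.ne' ha0.ne']
      exact Real.log_le_sub_one_of_pos (by positivity)
    have h3 : b / a - 1 = (b - a) / a := by field_simp
    have h4 : (b - a) / a ≤ (2 * γ * b) / (b / 2) := by
      apply div_le_div₀ (by positivity) (by linarith [habs.2]) (by positivity) h1
    have h5 : (2 * γ * b) / (b / 2) = 4 * γ := by field_simp; ring
    nlinarith [h2, h3 ▸ h2, h4, h5]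
  · have h2 : Real.log a - Real.log b ≤ a / b - 1 := by
      rw [← Real.log_div ha0.ne' hb.ne']
      exact Real.log_le_sub_one_of_pos (by positivity)
    have h3 : a / b - 1 = (a - b) / b := by field_simp
    have h4 : (a - b) / b ≤ 2 * γ := by
      rw [div_le_iff₀ hb]
      nlinarith [habs.2]
    nlinarith [h2, h3, h4]

end KnifeAux3

/-- **Theorem (consistency of the plug-in entropy estimator).** Let `p ∈ 𝒫_L` be an
`L`-Lipschitz density supported on `𝒳 = [0,1]ᵈ` with `p_max`, `C₁`, `C₂`, `K_max` finite.
For each `N`, let `X₁, …, X_N` and `X'₁, …, X'_{M(N)}` be independent i.i.d. samples from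
`p`, and let `Ĥ(𝒟; w)` be the plug-in estimate built from the Parzen–Rosenblatt estimator
with bandwidth `w(N) > 0`. If `w(N) → 0`, `M(N) → ∞`, `N·w(N) → 0` and
`N² log N/(w(N)^{2d} M(N)) → 0`, then `|Ĥ(𝒟; w(N)) - h(X)| → 0` in probability: for all
`δ, ε > 0` there is `N₀` such that for all `N ≥ N₀`,
`Pr(|Ĥ(𝒟; w(N)) - h(X)| > ε) ≤ δ`. -/
theorem knife_consistency {d : ℕ} (hd : 0 < d) (L : ℝ) (hL : 0 < L)
    (p κ : (Fin d → ℝ) → ℝ)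
    (hp0 : ∀ x, 0 ≤ p x) (hpmeas : Measurable p)
    (hpsupp : ∀ x, x ∉ Set.Icc (0 : Fin d → ℝ) 1 → p x = 0)
    (hpint : ∫ x, p x = 1)
    (hLip : ∀ x y, |p x - p y| ≤ L * ∑ k, |x k - y k|)
    (hκ0 : ∀ x, 0 ≤ κ x) (hκmeas : Measurable κ)
    (hκsupp : ∀ x, x ∉ Set.Icc (0 : Fin d → ℝ) 1 → κ x = 0)
    (hκint : ∫ x, κ x = 1)
    (pmax : ℝ) (hpmax : IsGreatest (p '' Set.Icc (0 : Fin d → ℝ) 1) pmax)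
    (hC₁int : Integrable fun x => p x * Real.log (p x) ^ 2)
    (hC₂int : Integrable fun u => (∑ k, |u k|) * κ u)
    (Kmax : ℝ) (hKmax : IsGreatest (κ '' Set.Icc (0 : Fin d → ℝ) 1) Kmax)
    (Ω : Type) [MeasurableSpace Ω] (μ : Measure Ω) [IsProbabilityMeasure μ]
    (M : ℕ → ℕ) (w : ℕ → ℝ) (hw : ∀ N, 0 < w N)
    (hM : Tendsto M atTop atTop)
    (hw0 : Tendsto w atTop (nhds 0))
    (hNw : Tendsto (fun N : ℕ => (N : ℝ) * w N) atTop (nhds 0))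
    (hN2logN : Tendsto (fun N : ℕ => (N : ℝ) ^ 2 * Real.log N / (w N ^ (2 * d) * M N))
      atTop (nhds 0))
    (X : (N : ℕ) → Fin N → Ω → (Fin d → ℝ))
    (X' : (N : ℕ) → Fin (M N) → Ω → (Fin d → ℝ))
    (hXmeas : ∀ N n, Measurable (X N n)) (hX'meas : ∀ N m, Measurable (X' N m))
    (hindep : ∀ N, iIndepFun (Sum.elim (X N) (X' N)) μ)
    (hXlaw : ∀ N n, Measure.map (X N n) μ = volume.withDensity fun x => ENNReal.ofReal (p x))
    (hX'law : ∀ N m,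
      Measure.map (X' N m) μ = volume.withDensity fun x => ENNReal.ofReal (p x)) :
    ∀ δ > 0, ∀ ε > 0, ∃ N₀ : ℕ, ∀ N ≥ N₀,
      (μ {ω | ε <
        |entropyEstimate (w N) κ (X N) (X' N) ω - (-∫ x, p x * Real.log (p x))|}).toReal
        ≤ δ := by
  classical
  intro δ hδ ε hε
  -- basic facts
  have hpintg : Integrable p := knife_integrable_p hpint
  have hple : ∀ x, p x ≤ pmax := knife_le_of_isGreatest hp0 hpsupp hpmax
  have hκle : ∀ x, κ x ≤ Kmax := knife_le_of_isGreatest hκ0 hκsupp hKmax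
  have hpmax0 : 0 ≤ pmax := knife_max_nonneg hp0 hpmax
  have hKmax0 : 0 ≤ Kmax := knife_max_nonneg hκ0 hKmax
  have hκintg : Integrable κ := knife_integrable_of_bounded_support hκmeas hκ0 hκsupp hκle
  set I₁ : ℝ := ∫ x, p x * Real.log (p x) with hI₁def
  set C₁ : ℝ := ∫ x, p x * Real.log (p x) ^ 2 with hC₁def
  have hC₁0 : 0 ≤ C₁ := by
    rw [hC₁def]
    exact integral_nonneg fun x => mul_nonneg (hp0 x) (sq_nonneg _)
  set C₂ : ℝ := L * ∫ u, (∑ k, |u k|) * κ u with hC₂def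
  set γ : ℝ := min (1/4) (ε/16) with hγdef
  have hγ0 : 0 < γ := lt_min (by norm_num) (by positivity)
  have hγ14 : γ ≤ 1/4 := min_le_left _ _
  have hγε : γ ≤ ε/16 := min_le_right _ _
  -- tendsto facts
  have hb1t : Tendsto (fun N : ℕ => (N : ℝ) * ∫ x in {y | p y < 1 / (N:ℝ)}, p x)
      atTop (nhds 0) := knife_tail hp0 hpmeas hpsupp
  have hw1ev : ∀ᶠ N : ℕ in atTop, w N ≤ 1 :=
    (hw0.eventually_lt_const (by norm_num : (0:ℝ) < 1)).mono fun N h => h.le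
  have hlogev : ∀ᶠ N : ℕ in atTop, 1 ≤ Real.log N := by
    filter_upwards [eventually_ge_atTop 3] with N hN3
    have hN3' : (3:ℝ) ≤ (N:ℝ) := by exact_mod_cast hN3
    rw [Real.le_log_iff_exp_le (by linarith)]
    calc Real.exp 1 ≤ 3 := by
          have := Real.exp_one_lt_d9
          linarith
      _ ≤ (N:ℝ) := hN3'
  have haux : Tendsto (fun N : ℕ => (N:ℝ)^3 / ((M N : ℝ) * (w N)^d)) atTop (nhds 0) := by
    have hprod : Tendsto (fun N : ℕ =>
        ((N:ℝ)^2 * Real.log N / ((w N)^(2*d) * (M N : ℝ))) * ((N:ℝ) * w N))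
        atTop (nhds 0) := by
      simpa using hN2logN.mul hNw
    refine squeeze_zero' ?_ ?_ hprod
    · filter_upwards [hM.eventually_ge_atTop 1] with N hM1
      have hM0 : (0:ℝ) < M N := by exact_mod_cast hM1
      have hwN : 0 < w N := hw N
      positivity
    · filter_upwards [hw1ev, hlogev, hM.eventually_ge_atTop 1] with N hw1 hlogN hM1
      have hwN : 0 < w N := hw N
      have hM0 : (0:ℝ) < M N := by exact_mod_cast hM1
      have h1 : (N:ℝ)^3/((M N : ℝ) * (w N)^d)
          = ((N:ℝ)^3 * (w N)^d)/((w N)^(2*d) * (M N : ℝ)) := by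
        rw [two_mul, pow_add]
        field_simp
      have h2 : ((N:ℝ)^2 * Real.log N/((w N)^(2*d) * (M N : ℝ))) * ((N:ℝ) * w N)
          = ((N:ℝ)^3 * (Real.log N * w N))/((w N)^(2*d) * (M N : ℝ)) := by
        field_simp
      rw [h1, h2]
      have h3 : (w N)^d ≤ Real.log N * w N := by
        calc (w N)^d ≤ (w N)^1 := pow_le_pow_of_le_one hwN.le hw1 hd
          _ = w N := pow_one _
          _ ≤ Real.log N * w N := le_mul_of_one_le_left hwN.le hlogN
      gcongr
  have hb2ev : ∀ᶠ N : ℕ in atTop,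
      (N:ℝ) * (Kmax * pmax / ((M N : ℝ) * (w N)^d * (γ/(N:ℝ))^2)) ≤ δ/3 := by
    have hc : Tendsto (fun N : ℕ =>
        (Kmax * pmax / γ^2) * ((N:ℝ)^3 / ((M N : ℝ) * (w N)^d))) atTop (nhds 0) := by
      simpa using haux.const_mul (Kmax * pmax / γ^2)
    have heq : ∀ᶠ N : ℕ in atTop,
        (Kmax * pmax / γ^2) * ((N:ℝ)^3 / ((M N : ℝ) * (w N)^d))
          = (N:ℝ) * (Kmax * pmax / ((M N : ℝ) * (w N)^d * (γ/(N:ℝ))^2)) := by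
      filter_upwards [hM.eventually_ge_atTop 1, eventually_ge_atTop 1] with N hM1 hN1
      have hN0 : (0:ℝ) < N := by exact_mod_cast hN1
      have hM0 : (0:ℝ) < M N := by exact_mod_cast hM1
      have hwN : 0 < w N := hw N
      field_simp
    have hc' : Tendsto (fun N : ℕ =>
        (N:ℝ) * (Kmax * pmax / ((M N : ℝ) * (w N)^d * (γ/(N:ℝ))^2))) atTop (nhds 0) :=
      Tendsto.congr' heq hc
    exact (hc'.eventually_lt_const (by positivity : (0:ℝ) < δ/3)).mono fun N h => h.le
  have hb1ev : ∀ᶠ N : ℕ in atTop, (N : ℝ) * ∫ x in {y | p y < 1 / (N:ℝ)}, p x ≤ δ/3 :=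
    (hb1t.eventually_lt_const (by positivity : (0:ℝ) < δ/3)).mono fun N h => h.le
  have hb3ev : ∀ᶠ N : ℕ in atTop, C₁ / ((N:ℝ) * (ε/4)^2) ≤ δ/3 := by
    have hc : Tendsto (fun N : ℕ => C₁ / ((N:ℝ) * (ε/4)^2)) atTop (nhds 0) := by
      have h1 : ∀ N : ℕ, C₁ / ((N:ℝ) * (ε/4)^2) = (C₁/(ε/4)^2) / (N:ℝ) := by
        intro N
        rw [div_div]
        ring_nf
      rw [funext h1]
      exact tendsto_const_div_atTop_nhds_zero_nat _
    exact (hc.eventually_lt_const (by positivity : (0:ℝ) < δ/3)).mono fun N h => h.le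
  have hC₂w : ∀ᶠ N : ℕ in atTop, C₂ * ((N:ℝ) * w N) ≤ γ := by
    have h' : Tendsto (fun N : ℕ => C₂ * ((N:ℝ) * w N)) atTop (nhds 0) := by
      simpa using hNw.const_mul C₂
    exact (h'.eventually_lt_const hγ0).mono fun N h => h.le
  have hC₂0 : 0 ≤ C₂ := by
    rw [hC₂def]
    refine mul_nonneg hL.le (integral_nonneg fun u => ?_)
    exact mul_nonneg (Finset.sum_nonneg fun k _ => abs_nonneg _) (hκ0 u)
  have hev : ∀ᶠ N : ℕ in atTop, (1 ≤ N ∧ w N ≤ 1 ∧ 1 ≤ M N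
      ∧ C₂ * ((N:ℝ) * w N) ≤ γ
      ∧ (N : ℝ) * ∫ x in {y | p y < 1 / (N:ℝ)}, p x ≤ δ/3
      ∧ (N:ℝ) * (Kmax * pmax / ((M N : ℝ) * (w N)^d * (γ/(N:ℝ))^2)) ≤ δ/3
      ∧ C₁ / ((N:ℝ) * (ε/4)^2) ≤ δ/3) := by
    filter_upwards [eventually_ge_atTop 1, hw1ev, hM.eventually_ge_atTop 1, hC₂w,
      hb1ev, hb2ev, hb3ev] with N h1 h2 h3 h4 h5 h6 h7
    exact ⟨h1, h2, h3, h4, h5, h6, h7⟩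
  obtain ⟨N₀, hN₀⟩ := eventually_atTop.1 hev
  refine ⟨N₀, fun N hN => ?_⟩
  obtain ⟨hN1, hwle1, hM1, hC2w, hb1, hb2, hb3⟩ := hN₀ N hN
  -- per-N setup
  have hwN : 0 < w N := hw N
  have hN0 : (0:ℝ) < N := by exact_mod_cast hN1
  have hMn : 0 < M N := hM1
  have hM0 : (0:ℝ) < M N := by exact_mod_cast hM1
  have hQle : ∀ x, knifeQ p κ (w N) x ≤ pmax :=
    knifeQ_le_pmax hp0 hpmeas hκ0 hκmeas hple hκintg hκint
  have hQ0 : ∀ x, 0 ≤ knifeQ p κ (w N) x := knifeQ_nonneg hp0 hκ0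
  have hQmeas : Measurable (knifeQ p κ (w N)) := knifeQ_measurable hpmeas hκmeas
  have hQint : ∀ x, Integrable (fun u => κ u * p (x - w N • u)) :=
    knifeQ_integrand_integrable hp0 hpmeas hκ0 hκmeas hple hκintg
  have hbias : ∀ x, |knifeQ p κ (w N) x - p x| ≤ γ / (N:ℝ) := by
    intro x
    refine (knifeQ_bias hp0 hpmeas hκ0 hκmeas hple hκintg hwN hκint hLip hC₂int x).trans ?_
    have h1 : (L * ∫ u, (∑ k, |u k|) * κ u) * w N = C₂ * w N := by rw [hC₂def]
    rw [h1, le_div_iff₀ hN0]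
    calc C₂ * w N * (N:ℝ) = C₂ * ((N:ℝ) * w N) := by ring
      _ ≤ γ := hC2w
  -- independence facts
  have hpairX' : ∀ m m', m ≠ m' → IndepFun (X' N m) (X' N m') μ := fun m m' hne =>
    (hindep N).indepFun (show (Sum.inr m : Fin N ⊕ Fin (M N)) ≠ Sum.inr m' from
      fun h => hne (Sum.inr.inj h))
  have hpairX : ∀ n n', n ≠ n' → IndepFun (X N n) (X N n') μ := fun n n' hne =>
    (hindep N).indepFun (show (Sum.inl n : Fin N ⊕ Fin (M N)) ≠ Sum.inl n' from
      fun h => hne (Sum.inl.inj h))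
  set V : Ω → (Fin (M N) → (Fin d → ℝ)) := fun ω m => X' N m ω with hVdef
  have hVmeas : Measurable V := measurable_pi_lambda _ fun m => hX'meas N m
  -- events
  set A : Set (Fin d → ℝ) := {y | p y < 1 / (N:ℝ)} with hAdef
  have hAmeas : MeasurableSet A := measurableSet_lt hpmeas measurable_const
  set CC : Set ((Fin d → ℝ) × (Fin (M N) → Fin d → ℝ)) :=
    {z | γ/(N:ℝ) ≤ |(1/((M N : ℝ) * (w N)^d)) * ∑ m, κ ((w N)⁻¹ • (z.1 - z.2 m))
      - knifeQ p κ (w N) z.1|} with hCCdef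
  have hCCmeas : MeasurableSet CC := by
    have h1 : Measurable (fun z : (Fin d → ℝ) × (Fin (M N) → Fin d → ℝ) =>
        (1/((M N : ℝ) * (w N)^d)) * ∑ m, κ ((w N)⁻¹ • (z.1 - z.2 m))
          - knifeQ p κ (w N) z.1) := by
      refine Measurable.sub (Measurable.const_mul ?_ _) (hQmeas.comp measurable_fst)
      refine Finset.measurable_sum _ fun m _ => hκmeas.comp ?_
      fun_prop
    exact measurableSet_le measurable_const h1.abs
  set E1 : Set Ω := ⋃ n : Fin N, (X N n) ⁻¹' A with hE1def
  set E2 : Set Ω := ⋃ n : Fin N, (fun ω => (X N n ω, V ω)) ⁻¹' CC with hE2def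
  set E3 : Set Ω := {ω | ε/4 ≤ |(1/(N:ℝ)) * ∑ n, Real.log (p (X N n ω)) - I₁|} with hE3def
  -- measure bounds
  have hrA0 : 0 ≤ ∫ x in A, p x := setIntegral_nonneg hAmeas fun x _ => hp0 x
  have hμE1 : μ E1 ≤ ENNReal.ofReal ((N : ℝ) * ∫ x in A, p x) := by
    refine (measure_iUnion_le _).trans ?_
    rw [tsum_fintype]
    refine le_of_eq ?_
    calc (∑ n : Fin N, μ ((X N n) ⁻¹' A))
        = ∑ _n : Fin N, ENNReal.ofReal (∫ x in A, p x) :=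
          Finset.sum_congr rfl fun n _ =>
            knife_law_apply (hXmeas N n) (hXlaw N n) hp0 hAmeas hpintg
      _ = (N : ENNReal) * ENNReal.ofReal (∫ x in A, p x) := by
          simp [Finset.sum_const, nsmul_eq_mul]
      _ = ENNReal.ofReal ((N : ℝ) * ∫ x in A, p x) := by
          rw [ENNReal.ofReal_mul (Nat.cast_nonneg N), ENNReal.ofReal_natCast]
  have hBpt : ∀ x : Fin d → ℝ,
      μ {ω | (x, V ω) ∈ CC}
        ≤ ENNReal.ofReal (Kmax * pmax / ((M N : ℝ) * (w N)^d * (γ/(N:ℝ))^2)) := by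
    intro x
    exact knife_cheb_x hp0 hpmeas hκ0 hκmeas hple hκle hKmax0 hwN μ hMn (X' N)
      (hX'meas N) (hX'law N) hpairX' x (by positivity) (hQle x) (hQ0 x) (hQint x)
  have hμE2 : μ E2 ≤ ENNReal.ofReal
      ((N:ℝ) * (Kmax * pmax / ((M N : ℝ) * (w N)^d * (γ/(N:ℝ))^2))) := by
    refine (measure_iUnion_le _).trans ?_
    rw [tsum_fintype]
    calc (∑ n : Fin N, μ ((fun ω => (X N n ω, V ω)) ⁻¹' CC))
        ≤ ∑ _n : Fin N, ENNReal.ofReal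
            (Kmax * pmax / ((M N : ℝ) * (w N)^d * (γ/(N:ℝ))^2)) := by
          refine Finset.sum_le_sum fun n _ => ?_
          exact knife_pair_bound μ (hXmeas N n) hVmeas
            (knife_indep_pair (hindep N) (hXmeas N) (hX'meas N) n) hCCmeas hBpt
      _ = (N : ENNReal) * ENNReal.ofReal
            (Kmax * pmax / ((M N : ℝ) * (w N)^d * (γ/(N:ℝ))^2)) := by
          simp [Finset.sum_const, nsmul_eq_mul]
      _ = ENNReal.ofReal
            ((N:ℝ) * (Kmax * pmax / ((M N : ℝ) * (w N)^d * (γ/(N:ℝ))^2))) := by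
          rw [ENNReal.ofReal_mul (Nat.cast_nonneg N), ENNReal.ofReal_natCast]
  have hμE3 : μ E3 ≤ ENNReal.ofReal (C₁ / ((N:ℝ) * (ε/4)^2)) := by
    have := knife_lln hp0 hpmeas hC₁int μ hN1 (X N) (hXmeas N) (hXlaw N) hpairX
      (c := ε/4) (by positivity)
    exact this
  -- inclusion
  have hincl : {ω | ε < |entropyEstimate (w N) κ (X N) (X' N) ω - (-I₁)|}
      ⊆ (E1 ∪ E2) ∪ E3 := by
    intro ω hω
    rw [Set.mem_setOf_eq] at hω
    by_contra hnot
    rw [Set.mem_union, Set.mem_union] at hnot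
    push_neg at hnot
    obtain ⟨⟨h1, h2⟩, h3⟩ := hnot
    have hp_lb : ∀ n : Fin N, 1/(N:ℝ) ≤ p (X N n ω) := by
      intro n
      by_contra hc
      exact h1 (Set.mem_iUnion.2 ⟨n, show p (X N n ω) < 1/(N:ℝ) from lt_of_not_ge hc⟩)
    have hconc : ∀ n : Fin N,
        |parzen (w N) κ (X' N) (X N n ω) ω - knifeQ p κ (w N) (X N n ω)| < γ/(N:ℝ) := by
      intro n
      by_contra hc
      refine h2 (Set.mem_iUnion.2 ⟨n, ?_⟩)
      exact le_of_not_gt hc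
    have hS : |(1/(N:ℝ)) * ∑ n, Real.log (p (X N n ω)) - I₁| < ε/4 := by
      by_contra hc
      exact h3 (le_of_not_gt hc)
    have hlog : ∀ n : Fin N,
        |Real.log (parzen (w N) κ (X' N) (X N n ω) ω) - Real.log (p (X N n ω))|
          ≤ 4 * γ := by
      intro n
      have hb0 : 0 < p (X N n ω) := lt_of_lt_of_le (by positivity) (hp_lb n)
      have hab : |parzen (w N) κ (X' N) (X N n ω) ω - p (X N n ω)|
          ≤ 2 * γ * p (X N n ω) := by
        have h6 : |parzen (w N) κ (X' N) (X N n ω) ω - p (X N n ω)| ≤ γ/(N:ℝ) + γ/(N:ℝ) := by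
          calc |parzen (w N) κ (X' N) (X N n ω) ω - p (X N n ω)|
              ≤ |parzen (w N) κ (X' N) (X N n ω) ω - knifeQ p κ (w N) (X N n ω)|
                + |knifeQ p κ (w N) (X N n ω) - p (X N n ω)| := abs_sub_le _ _ _
            _ ≤ γ/(N:ℝ) + γ/(N:ℝ) := add_le_add (hconc n).le (hbias _)
        calc |parzen (w N) κ (X' N) (X N n ω) ω - p (X N n ω)| ≤ γ/(N:ℝ) + γ/(N:ℝ) := h6
          _ = 2 * γ * (1/(N:ℝ)) := by ring
          _ ≤ 2 * γ * p (X N n ω) :=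
              mul_le_mul_of_nonneg_left (hp_lb n) (by positivity)
      exact knife_log_diff hb0 hγ0.le hγ14 hab
    have hEest : entropyEstimate (w N) κ (X N) (X' N) ω
        = -(1/(N:ℝ)) * ∑ n, Real.log (parzen (w N) κ (X' N) (X N n ω) ω) := rfl
    have hkey : |entropyEstimate (w N) κ (X N) (X' N) ω - (-I₁)|
        = |(1/(N:ℝ)) * ∑ n, Real.log (parzen (w N) κ (X' N) (X N n ω) ω) - I₁| := by
      rw [hEest, show -(1/(N:ℝ)) * (∑ n, Real.log (parzen (w N) κ (X' N) (X N n ω) ω)) - (-I₁)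
        = -((1/(N:ℝ)) * (∑ n, Real.log (parzen (w N) κ (X' N) (X N n ω) ω)) - I₁) from by ring,
        abs_neg]
    have h8 : |(∑ n, Real.log (parzen (w N) κ (X' N) (X N n ω) ω))
        - ∑ n, Real.log (p (X N n ω))| ≤ (N:ℝ) * (4*γ) := by
      rw [← Finset.sum_sub_distrib]
      refine (Finset.abs_sum_le_sum_abs _ _).trans ?_
      calc (∑ n, |Real.log (parzen (w N) κ (X' N) (X N n ω) ω) - Real.log (p (X N n ω))|)
          ≤ ∑ _n : Fin N, 4*γ := Finset.sum_le_sum fun n _ => hlog n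
        _ = (N:ℝ) * (4*γ) := by simp [Finset.sum_const, nsmul_eq_mul]
    have hdiff : |(1/(N:ℝ)) * ∑ n, Real.log (parzen (w N) κ (X' N) (X N n ω) ω) - I₁|
        ≤ ε/2 := by
      have h7 : (1/(N:ℝ)) * (∑ n, Real.log (parzen (w N) κ (X' N) (X N n ω) ω)) - I₁
          = (1/(N:ℝ)) * ((∑ n, Real.log (parzen (w N) κ (X' N) (X N n ω) ω))
              - ∑ n, Real.log (p (X N n ω)))
            + ((1/(N:ℝ)) * (∑ n, Real.log (p (X N n ω))) - I₁) := by ring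
      calc |(1/(N:ℝ)) * ∑ n, Real.log (parzen (w N) κ (X' N) (X N n ω) ω) - I₁|
          ≤ |(1/(N:ℝ)) * ((∑ n, Real.log (parzen (w N) κ (X' N) (X N n ω) ω))
              - ∑ n, Real.log (p (X N n ω)))|
            + |(1/(N:ℝ)) * (∑ n, Real.log (p (X N n ω))) - I₁| := by
            rw [h7]
            exact abs_add_le _ _
        _ ≤ (1/(N:ℝ)) * ((N:ℝ) * (4*γ)) + ε/4 := by
            refine add_le_add ?_ hS.le
            rw [abs_mul, abs_of_nonneg (by positivity : (0:ℝ) ≤ 1/(N:ℝ))]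
            exact mul_le_mul_of_nonneg_left h8 (by positivity)
        _ = 4*γ + ε/4 := by field_simp
        _ ≤ ε/4 + ε/4 := by
            have : 4*γ ≤ 4*(ε/16) := by linarith
            linarith
        _ = ε/2 := by ring
    rw [hkey] at hω
    linarith [lt_of_lt_of_le hω hdiff]
  -- combine
  have hb1nn : 0 ≤ (N : ℝ) * ∫ x in A, p x := mul_nonneg (Nat.cast_nonneg N) hrA0
  have hb2nn : 0 ≤ (N:ℝ) * (Kmax * pmax / ((M N : ℝ) * (w N)^d * (γ/(N:ℝ))^2)) := by
    refine mul_nonneg (Nat.cast_nonneg N) (div_nonneg (mul_nonneg hKmax0 hpmax0) ?_)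
    positivity
  have hb3nn : 0 ≤ C₁ / ((N:ℝ) * (ε/4)^2) := div_nonneg hC₁0 (by positivity)
  have hmeasle : μ {ω | ε < |entropyEstimate (w N) κ (X N) (X' N) ω - (-I₁)|}
      ≤ ENNReal.ofReal ((N : ℝ) * ∫ x in A, p x)
        + ENNReal.ofReal ((N:ℝ) * (Kmax * pmax / ((M N : ℝ) * (w N)^d * (γ/(N:ℝ))^2)))
        + ENNReal.ofReal (C₁ / ((N:ℝ) * (ε/4)^2)) :=
    (measure_mono hincl).trans ((measure_union_le _ _).trans
      (add_le_add ((measure_union_le _ _).trans (add_le_add hμE1 hμE2)) hμE3))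
  have hsum : ENNReal.ofReal ((N : ℝ) * ∫ x in A, p x)
        + ENNReal.ofReal ((N:ℝ) * (Kmax * pmax / ((M N : ℝ) * (w N)^d * (γ/(N:ℝ))^2)))
        + ENNReal.ofReal (C₁ / ((N:ℝ) * (ε/4)^2)) ≤ ENNReal.ofReal δ := by
    rw [← ENNReal.ofReal_add hb1nn hb2nn, ← ENNReal.ofReal_add (add_nonneg hb1nn hb2nn) hb3nn]
    refine ENNReal.ofReal_le_ofReal ?_
    linarith
  calc (μ {ω | ε < |entropyEstimate (w N) κ (X N) (X' N) ω - (-I₁)|}).toReal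
      ≤ (ENNReal.ofReal δ).toReal :=
        ENNReal.toReal_mono ENNReal.ofReal_ne_top (hmeasle.trans hsum)
    _ = δ := ENNReal.toReal_ofReal hδ.le
end

section
/- Fix d ∈ ℕ, L > 0, δ > 0, and let p ∈ 𝒫_L with C₂ and K_max finite. Let X'₁,…,X'_M be i.i.d. samples from p, let X₁,…,X_N be i.i.d. samples from p independent of (X'₁,…,X'_M), let p̂(x; w) = (1/(M wᵈ)) Σ_{m=1}^M κ((x − X'_m)/w) for bandwidth w > 0, and let Ĥ(𝒟; w) = −(1/N) Σ_{n=1}^N log p̂(X_n; w). If 1 − (3 N K_max/(wᵈ δ)) √(log(6N/δ)/(2M)) − 3 N C₂ w/δ > 0, then with probability greater than 1 − 2δ/3, |Ĥ(𝒟; w) + (1/N) Σ_{n=1}^N log p(X_n)| ≤ −log(1 − (3 N K_max/(wᵈ δ)) √(log(6N/δ)/(2M)) − 3 N C₂ w/δ). -/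
open scoped ENNReal NNReal


open MeasureTheory ProbabilityTheory

namespace KnifeAux

lemma int_bdd {Ω : Type*} [MeasurableSpace Ω] (μ : Measure Ω) [IsFiniteMeasure μ]
    {f : Ω → ℝ} (hf : Measurable f) {C : ℝ} (h : ∀ ω, |f ω| ≤ C) : Integrable f μ :=
  (integrable_const C).mono' hf.aestronglyMeasurable (ae_of_all _ (by simpa using h))

lemma memL2_bdd {Ω : Type*} [MeasurableSpace Ω] (μ : Measure Ω) [IsFiniteMeasure μ]
    {f : Ω → ℝ} (hf : Measurable f) {C : ℝ} (h : ∀ ω, |f ω| ≤ C) : MemLp f 2 μ :=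
  (memLp_top_of_bound hf.aestronglyMeasurable C
    (ae_of_all _ (by simpa using h))).mono_exponent le_top

lemma cs_bdd {Ω : Type*} [MeasurableSpace Ω] (μ : Measure Ω) [IsProbabilityMeasure μ]
    {Z : Ω → ℝ} (hZ : Measurable Z) {C : ℝ} (hb : ∀ ω, |Z ω| ≤ C) :
    ∫ ω, |Z ω| ∂μ ≤ Real.sqrt (∫ ω, (Z ω)^2 ∂μ) := by
  have hint : Integrable Z μ := int_bdd μ hZ hb
  have hint1 : Integrable (fun ω => |Z ω|) μ := hint.abs
  have hint2 : Integrable (fun ω => (Z ω)^2) μ :=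
    (integrable_const (C^2)).mono' (hZ.pow_const 2).aestronglyMeasurable
      (ae_of_all _ (fun ω => by
        have := hb ω
        have h0 : (0:ℝ) ≤ C := le_trans (abs_nonneg _) this
        simp only [Real.norm_eq_abs, abs_pow, sq_abs]
        nlinarith [abs_nonneg (Z ω), sq_abs (Z ω)]))
  set c := ∫ ω, |Z ω| ∂μ with hc
  have hc0 : 0 ≤ c := integral_nonneg (fun ω => abs_nonneg _)
  have hexp : 0 ≤ ∫ ω, (|Z ω| - c)^2 ∂μ := integral_nonneg (fun ω => sq_nonneg _)
  have heq : ∫ ω, (|Z ω| - c)^2 ∂μ = (∫ ω, (Z ω)^2 ∂μ) - c^2 := by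
    have hpt : ∀ ω, (|Z ω| - c)^2 = (Z ω)^2 - 2*c*|Z ω| + c^2 := by
      intro ω; nlinarith [sq_abs (Z ω)]
    rw [integral_congr_ae (ae_of_all _ hpt)]
    have h1 : Integrable (fun ω => (Z ω)^2 - 2*c*|Z ω|) μ := hint2.sub (hint1.const_mul _)
    rw [integral_add h1 (integrable_const _),
        integral_sub hint2 (hint1.const_mul _), MeasureTheory.integral_const_mul, integral_const]
    simp [← hc]; ring
  have hfin : c^2 ≤ ∫ ω, (Z ω)^2 ∂μ := by linarith
  exact (Real.le_sqrt hc0 (integral_nonneg fun ω => sq_nonneg _)).mpr hfin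

lemma dev_le_sqrt_var {Ω : Type*} [MeasurableSpace Ω] (μ : Measure Ω) [IsProbabilityMeasure μ]
    {Z : Ω → ℝ} (hZ : Measurable Z) {C : ℝ} (hb : ∀ ω, |Z ω| ≤ C) :
    ∫ ω, |Z ω - ∫ ω', Z ω' ∂μ| ∂μ ≤ Real.sqrt (variance Z μ) := by
  set m := ∫ ω', Z ω' ∂μ with hm
  have hZm : Measurable (fun ω => Z ω - m) := hZ.sub measurable_const
  have hbm : ∀ ω, |Z ω - m| ≤ C + |m| := fun ω => by
    calc |Z ω - m| ≤ |Z ω| + |m| := abs_sub _ _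
      _ ≤ C + |m| := by linarith [hb ω]
  have h := cs_bdd μ hZm hbm
  have hvar : variance Z μ = ∫ ω, (Z ω - m)^2 ∂μ := by
    have hl2 : MemLp Z 2 μ := memL2_bdd μ hZ hb
    rw [variance_eq_integral hl2.aestronglyMeasurable.aemeasurable]
  rw [hvar]
  exact h

lemma markov_bdd {Ω : Type*} [MeasurableSpace Ω] (μ : Measure Ω) [IsProbabilityMeasure μ]
    {f : Ω → ℝ} (hf0 : ∀ ω, 0 ≤ f ω) (hfi : Integrable f μ)
    {t A : ℝ} (ht : 0 < t) (hA : ∫ ω, f ω ∂μ ≤ A) :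
    μ {ω | t < f ω} ≤ ENNReal.ofReal (A / t) := by
  have h1 : μ {ω | t < f ω} ≤ μ {ω | ENNReal.ofReal t ≤ ENNReal.ofReal (f ω)} :=
    measure_mono fun ω hω => ENNReal.ofReal_le_ofReal (le_of_lt hω)
  have h2 := mul_meas_ge_le_lintegral₀ (μ := μ)
    (f := fun ω => ENNReal.ofReal (f ω)) hfi.aemeasurable.ennreal_ofReal (ENNReal.ofReal t)
  have h3 : ∫⁻ ω, ENNReal.ofReal (f ω) ∂μ = ENNReal.ofReal (∫ ω, f ω ∂μ) :=
    (ofReal_integral_eq_lintegral_ofReal hfi (ae_of_all _ hf0)).symm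
  have ht0 : ENNReal.ofReal t ≠ 0 := by simp [ht]
  calc μ {ω | t < f ω} ≤ μ {ω | ENNReal.ofReal t ≤ ENNReal.ofReal (f ω)} := h1
    _ ≤ (∫⁻ ω, ENNReal.ofReal (f ω) ∂μ) / ENNReal.ofReal t := by
        rw [ENNReal.le_div_iff_mul_le (Or.inl ht0) (Or.inl ENNReal.ofReal_ne_top), mul_comm]
        exact h2
    _ ≤ ENNReal.ofReal A / ENNReal.ofReal t := by
        rw [h3]; exact ENNReal.div_le_div_right (ENNReal.ofReal_le_ofReal hA) _
    _ = ENNReal.ofReal (A / t) := (ENNReal.ofReal_div_of_pos ht).symm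

lemma integral_withDensity {d : ℕ} (p g : (Fin d → ℝ) → ℝ) (hp : Measurable p)
    (hp0 : ∀ x, 0 ≤ p x) :
    ∫ u, g u ∂(volume.withDensity fun x => ENNReal.ofReal (p x)) = ∫ u, p u * g u := by
  have h1 : (volume.withDensity fun x => ENNReal.ofReal (p x))
      = volume.withDensity fun x => ((p x).toNNReal : ℝ≥0∞) := by
    simp [ENNReal.ofReal]
  rw [h1, integral_withDensity_eq_integral_smul (by fun_prop) g]
  congr 1; funext u
  simp [NNReal.smul_def, Real.coe_toNNReal _ (hp0 u)]

lemma change_var {d : ℕ} (p κ : (Fin d → ℝ) → ℝ) (w : ℝ) (hw : 0 < w) (x : Fin d → ℝ) :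
    ∫ u, p u * κ (w⁻¹ • (x - u)) = w ^ d * ∫ y, κ y * p (x - w • y) := by
  have h1 : ∫ u, p u * κ (w⁻¹ • (x - u))
      = ∫ u, p (x - u) * κ (w⁻¹ • u) := by
    rw [← integral_sub_left_eq_self (fun u => p (x - u) * κ (w⁻¹ • u)) volume x]
    congr 1; funext u; simp
  have h2 : ∫ u, p (x - u) * κ (w⁻¹ • u)
      = ∫ u, (fun y => κ y * p (x - w • y)) (w⁻¹ • u) := by
    congr 1; funext u
    show p (x - u) * κ (w⁻¹ • u) = κ (w⁻¹ • u) * p (x - w • w⁻¹ • u)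
    rw [smul_smul, mul_inv_cancel₀ (ne_of_gt hw), one_smul, mul_comm]
  rw [h1, h2, Measure.integral_comp_inv_smul_of_nonneg volume
    (fun y => κ y * p (x - w • y)) hw.le]
  simp [Module.finrank_fin_fun, smul_eq_mul]

lemma log_ratio_bound {τ ph pv : ℝ} (hτ0 : 0 ≤ τ) (hτ1 : τ < 1) (hpv : 0 ≤ pv)
    (h : |ph - pv| ≤ τ * pv) : |Real.log pv - Real.log ph| ≤ -Real.log (1 - τ) := by
  have h1τ : 0 < 1 - τ := by linarith
  rcases eq_or_lt_of_le hpv with hpv0 | hpv0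
  · have : ph = 0 := by
      have : |ph| ≤ 0 := by simpa [← hpv0] using h
      simpa using abs_nonpos_iff.mp (by linarith [abs_nonneg ph])
    simp only [← hpv0, this, Real.log_zero, sub_zero, abs_zero]
    rw [neg_nonneg]
    exact Real.log_nonpos (by linarith) (by linarith)
  · have hub : ph ≤ (1 + τ) * pv := by
      have := (abs_le.mp h).2; linarith
    have hlb : (1 - τ) * pv ≤ ph := by
      have := (abs_le.mp h).1; nlinarith
    have hph : 0 < ph := lt_of_lt_of_le (by positivity) hlb
    rw [abs_le]
    constructor
    ·
      -- log pv - log ph ≥ log(1-τ):  ph ≤ (1+τ)pv gives log ph ≤ log(1+τ)+log pv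
      have h2 : Real.log ph ≤ Real.log (1 + τ) + Real.log pv := by
        calc Real.log ph ≤ Real.log ((1 + τ) * pv) := Real.log_le_log hph hub
          _ = Real.log (1 + τ) + Real.log pv := Real.log_mul (by positivity) (ne_of_gt hpv0)
      have h3 : Real.log (1 + τ) ≤ -Real.log (1 - τ) := by
        rw [← Real.log_inv]
        apply Real.log_le_log (by positivity)
        rw [inv_eq_one_div, le_div_iff₀ h1τ]
        nlinarith
      linarith
    · have h2 : Real.log (1 - τ) + Real.log pv ≤ Real.log ph := by
        calc Real.log (1 - τ) + Real.log pv = Real.log ((1 - τ) * pv) :=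
              (Real.log_mul (ne_of_gt h1τ) (ne_of_gt hpv0)).symm
          _ ≤ Real.log ph := Real.log_le_log (by positivity) hlb
      linarith


lemma density_zero_null {d : ℕ} (p : (Fin d → ℝ) → ℝ) (hp : Measurable p) :
    (volume.withDensity fun x => ENNReal.ofReal (p x)) {x | p x ≤ 0} = 0 := by
  rw [withDensity_apply _ (measurableSet_le hp measurable_const)]
  have h : ∀ x ∈ {x | p x ≤ 0}, ENNReal.ofReal (p x) = 0 := fun x hx =>
    ENNReal.ofReal_eq_zero.mpr hx
  rw [setLIntegral_congr_fun (measurableSet_le hp measurable_const) (fun x hx => h x hx)]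
  simp


lemma exp_dev {d M : ℕ} {Ω : Type} [MeasurableSpace Ω] (μ : Measure Ω) [IsProbabilityMeasure μ]
    (L : ℝ) (hL : 0 < L) (p κ : (Fin d → ℝ) → ℝ)
    (hp0 : ∀ x, 0 ≤ p x) (hpmeas : Measurable p)
    (hLip : ∀ x y, |p x - p y| ≤ L * ∑ k, |x k - y k|)
    (hκ0 : ∀ x, 0 ≤ κ x) (hκmeas : Measurable κ)
    (hκsupp : ∀ x, x ∉ Set.Icc (0 : Fin d → ℝ) 1 → κ x = 0)
    (hκInt : Integrable κ) (hκint : ∫ x, κ x = 1)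
    (hC₂int : Integrable fun u => (∑ k, |u k|) * κ u)
    (Kmax : ℝ) (hKmax0 : 0 ≤ Kmax) (hκle : ∀ x, κ x ≤ Kmax)
    (hM : 0 < M)
    (X' : Fin M → Ω → (Fin d → ℝ)) (hX'meas : ∀ m, Measurable (X' m))
    (hX'law : ∀ m, Measure.map (X' m) μ = volume.withDensity fun x => ENNReal.ofReal (p x))
    (w : ℝ) (hw : 0 < w) (x : Fin d → ℝ)
    (hYindep : ∀ m m', m ≠ m' → IndepFun (fun ω => κ (w⁻¹ • (x - X' m ω)))
      (fun ω => κ (w⁻¹ • (x - X' m' ω))) μ) :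
    ∫ ω, |parzen w κ X' x ω - p x| ∂μ
      ≤ Kmax / (w ^ d * (2 * Real.sqrt M)) + (L * ∫ u, (∑ k, |u k|) * κ u) * w := by
  have hwd : (0:ℝ) < w ^ d := pow_pos hw d
  have hM' : (0:ℝ) < (M:ℝ) := Nat.cast_pos.mpr hM
  set Y : Fin M → Ω → ℝ := fun m ω => κ (w⁻¹ • (x - X' m ω)) with hY
  have hYmeas : ∀ m, Measurable (Y m) := fun m =>
    hκmeas.comp (((measurable_const.sub (hX'meas m)).const_smul w⁻¹))
  have hYb : ∀ m ω, |Y m ω| ≤ Kmax := fun m ω => by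
    rw [abs_of_nonneg (hκ0 _)]; exact hκle _
  set c : ℝ := 1 / ((M:ℝ) * w ^ d) with hc
  have hc0 : 0 < c := by positivity
  set I : ℝ := ∫ u, p u * κ (w⁻¹ • (x - u)) with hI
  have hEY : ∀ m, ∫ ω, Y m ω ∂μ = I := by
    intro m
    have hsm : Measurable fun u => κ (w⁻¹ • (x - u)) :=
      hκmeas.comp ((measurable_const.sub measurable_id).const_smul w⁻¹)
    have hmap := integral_map (φ := X' m) (μ := μ) (hX'meas m).aemeasurable
      (f := fun u => κ (w⁻¹ • (x - u))) hsm.aestronglyMeasurable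
    show ∫ ω, κ (w⁻¹ • (x - X' m ω)) ∂μ = I
    rw [← hmap, hX'law m, integral_withDensity p _ hpmeas hp0]
  have hI0 : 0 ≤ I := integral_nonneg fun u => mul_nonneg (hp0 u) (hκ0 _)
  set S : Ω → ℝ := parzen w κ X' x with hS
  have hSc : ∀ ω, S ω = c * (∑ m, Y m) ω := fun ω => by
    simp [hS, parzen, hc, hY, Finset.sum_apply]
  have hTmeas : Measurable (∑ m, Y m : Ω → ℝ) := by
    have heq : (∑ m, Y m : Ω → ℝ) = fun ω => ∑ m, Y m ω := by
      funext ω; simp [Finset.sum_apply]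
    rw [heq]
    exact Finset.measurable_sum _ fun m _ => hYmeas m
  have hSmeas : Measurable S := by
    have : S = fun ω => c * (∑ m, Y m) ω := funext hSc
    rw [this]; exact (hTmeas.const_mul c)
  have hTb : ∀ ω, |(∑ m, Y m : Ω → ℝ) ω| ≤ M * Kmax := fun ω => by
    rw [Finset.sum_apply]
    calc |∑ m, Y m ω| ≤ ∑ m, |Y m ω| := Finset.abs_sum_le_sum_abs _ _
      _ ≤ ∑ _m : Fin M, Kmax := Finset.sum_le_sum fun m _ => hYb m ω
      _ = M * Kmax := by simp [mul_comm]
  have hSb : ∀ ω, |S ω| ≤ c * (M * Kmax) := fun ω => by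
    rw [hSc ω, abs_mul, abs_of_pos hc0]
    exact mul_le_mul_of_nonneg_left (hTb ω) hc0.le
  -- expectation of S
  have hES : ∫ ω, S ω ∂μ = c * ((M:ℝ) * I) := by
    rw [integral_congr_ae (ae_of_all _ hSc), MeasureTheory.integral_const_mul]
    congr 1
    simp only [Finset.sum_apply]
    rw [integral_finset_sum _ (fun m _ => int_bdd μ (hYmeas m) (hYb m))]
    simp [hEY]
  -- variance of each Y
  have hVarY : ∀ m, variance (Y m) μ ≤ Kmax^2 / 4 := by
    intro m
    have hl2 : MemLp (Y m) 2 μ := memL2_bdd μ (hYmeas m) (hYb m)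
    have hsq : ∫ ω, (Y m ω)^2 ∂μ ≤ Kmax * I := by
      rw [← hEY m, ← MeasureTheory.integral_const_mul]
      apply integral_mono (int_bdd μ ((hYmeas m).pow_const 2)
        (C := Kmax^2) (fun ω => by
          rw [abs_of_nonneg (sq_nonneg _)]
          have h1 := hYb m ω; have h2 := hκ0 (w⁻¹ • (x - X' m ω))
          rw [abs_of_nonneg h2] at h1
          nlinarith))
        ((int_bdd μ (hYmeas m) (hYb m)).const_mul Kmax)
      intro ω
      have h1 := hYb m ω; have h2 := hκ0 (w⁻¹ • (x - X' m ω))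
      rw [abs_of_nonneg h2] at h1
      simp only [hY]
      nlinarith
    have hvd := variance_eq_sub hl2
    have hEYnn : 0 ≤ ∫ ω, Y m ω ∂μ := le_of_eq_of_le (by rfl) (by rw [hEY m]; exact hI0)
    have hpow : μ[(Y m)^ (2:ℕ)] = ∫ ω, (Y m ω)^2 ∂μ := by
      congr 1
    rw [hvd, hpow]
    have hEYI : μ[Y m] = I := hEY m
    rw [hEYI]
    nlinarith [sq_nonneg (Kmax - 2 * I)]
  -- variance of S
  have hVarS : variance S μ ≤ c^2 * ((M:ℝ) * (Kmax^2/4)) := by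
    have hfun : S = fun ω => c * (∑ m, Y m) ω := funext hSc
    rw [hfun, variance_const_mul]
    have hsum : variance (∑ m, Y m) μ = ∑ m, variance (Y m) μ :=
      IndepFun.variance_sum (fun m _ => memL2_bdd μ (hYmeas m) (hYb m))
        (fun m _ m' _ hmm' => hYindep m m' hmm')
    rw [hsum]
    have : ∑ m, variance (Y m) μ ≤ ∑ _m : Fin M, Kmax^2/4 :=
      Finset.sum_le_sum fun m _ => hVarY m
    have h2 : (∑ _m : Fin M, Kmax^2/4 : ℝ) = (M:ℝ) * (Kmax^2/4) := by simp [mul_comm]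
    nlinarith [sq_nonneg c]
  -- fluctuation bound
  have hfluct : ∫ ω, |S ω - ∫ ω', S ω' ∂μ| ∂μ ≤ Kmax / (w ^ d * (2 * Real.sqrt M)) := by
    have h1 := dev_le_sqrt_var μ hSmeas hSb
    have hsqM : (Real.sqrt M)^2 = (M:ℝ) := Real.sq_sqrt (Nat.cast_nonneg M)
    have hsqM0 : 0 < Real.sqrt M := Real.sqrt_pos.mpr hM'
    have h2 : c^2 * ((M:ℝ) * (Kmax^2/4)) = (Kmax / (w ^ d * (2 * Real.sqrt M)))^2 := by
      rw [hc, div_pow, mul_pow, div_pow, mul_pow, mul_pow, hsqM, one_pow]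
      field_simp
      ring
    calc ∫ ω, |S ω - ∫ ω', S ω' ∂μ| ∂μ ≤ Real.sqrt (variance S μ) := h1
      _ ≤ Real.sqrt ((Kmax / (w ^ d * (2 * Real.sqrt M)))^2) := by
          apply Real.sqrt_le_sqrt; rw [← h2]; exact hVarS
      _ = Kmax / (w ^ d * (2 * Real.sqrt M)) := Real.sqrt_sq (by positivity)
  -- bias bound
  set J : ℝ := ∫ y, κ y * p (x - w • y) with hJ
  have hESJ : ∫ ω, S ω ∂μ = J := by
    rw [hES, hI, change_var p κ w hw x, hc, ← hJ]
    field_simp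
  have hsum_le_d : ∀ y : Fin d → ℝ, y ∈ Set.Icc (0 : Fin d → ℝ) 1 → ∑ k, |y k| ≤ d := by
    intro y hy
    calc ∑ k, |y k| ≤ ∑ _k : Fin d, 1 := Finset.sum_le_sum fun k _ => by
          rw [abs_of_nonneg (hy.1 k)]; exact hy.2 k
      _ = d := by simp
  have hmeas_aff : Measurable fun y : Fin d → ℝ => p (x - w • y) :=
    hpmeas.comp (measurable_const.sub (measurable_id.const_smul w))
  have hlip_pt : ∀ y : Fin d → ℝ, |p (x - w • y) - p x| ≤ L * w * ∑ k, |y k| := by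
    intro y
    have := hLip (x - w • y) x
    have heq : ∑ k, |(x - w • y) k - x k| = w * ∑ k, |y k| := by
      rw [Finset.mul_sum]
      congr 1; funext k
      simp [abs_mul, abs_of_pos hw, mul_comm]
    rw [heq] at this
    calc |p (x - w • y) - p x| ≤ L * (w * ∑ k, |y k|) := this
      _ = L * w * ∑ k, |y k| := by ring
  have hJint : Integrable (fun y => κ y * p (x - w • y)) := by
    apply (hκInt.const_mul (p x + L * w * d)).mono'
      ((hκmeas.mul hmeas_aff)).aestronglyMeasurable
    apply ae_of_all
    intro y
    simp only [Real.norm_eq_abs, Pi.mul_apply]; rw [abs_mul, abs_of_nonneg (hκ0 y), abs_of_nonneg (hp0 _)]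
    by_cases hy : y ∈ Set.Icc (0 : Fin d → ℝ) 1
    · have h1 := hlip_pt y
      have h2 : p (x - w • y) ≤ p x + L * w * ∑ k, |y k| := by
        have := (abs_le.mp h1).2; linarith
      have h3 : p (x - w • y) ≤ p x + L * w * d := by
        have h4 := mul_le_mul_of_nonneg_left (hsum_le_d y hy) (mul_nonneg hL.le hw.le)
        linarith
      calc κ y * p (x - w • y) ≤ κ y * (p x + L * w * d) :=
            mul_le_mul_of_nonneg_left h3 (hκ0 y)
        _ = (p x + L * w * ↑d) * κ y := by ring
    · simp [hκsupp y hy]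
  have hconst : ∫ y, κ y * p x = p x := by
    rw [MeasureTheory.integral_mul_const, hκint, one_mul]
  have hbias : |J - p x| ≤ (L * ∫ u, (∑ k, |u k|) * κ u) * w := by
    have hdiff : ∫ y, κ y * (p (x - w • y) - p x) = J - p x := by
      have heqf : (fun y => κ y * (p (x - w • y) - p x))
          = fun y => κ y * p (x - w • y) - κ y * p x := funext fun y => by ring
      rw [heqf, integral_sub hJint (hκInt.mul_const (p x)), hconst]
    rw [← hdiff]
    calc |∫ y, κ y * (p (x - w • y) - p x)| ≤ ∫ y, |κ y| * |p (x - w • y) - p x| := by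
          simpa [Real.norm_eq_abs, abs_mul] using
            norm_integral_le_integral_norm (fun y => κ y * (p (x - w • y) - p x))
      _ ≤ ∫ y, L * w * ((∑ k, |y k|) * κ y) := by
          apply integral_mono_of_nonneg
            (ae_of_all _ fun y => mul_nonneg (abs_nonneg _) (abs_nonneg _))
            (hC₂int.const_mul (L * w))
          apply ae_of_all
          intro y
          dsimp only
          rw [abs_of_nonneg (hκ0 y)]
          calc κ y * |p (x - w • y) - p x| ≤ κ y * (L * w * ∑ k, |y k|) :=
                mul_le_mul_of_nonneg_left (hlip_pt y) (hκ0 y)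
            _ = L * w * ((∑ k, |y k|) * κ y) := by ring
      _ = (L * ∫ u, (∑ k, |u k|) * κ u) * w := by
          rw [MeasureTheory.integral_const_mul]; ring
  -- combine
  have hfinal : ∫ ω, |S ω - p x| ∂μ
      ≤ (∫ ω, |S ω - ∫ ω', S ω' ∂μ| ∂μ) + |(∫ ω', S ω' ∂μ) - p x| := by
    have hint1 : Integrable (fun ω => |S ω - p x|) μ :=
      (int_bdd μ (hSmeas.sub measurable_const) (C := c * (M * Kmax) + |p x|)
        (fun ω => (abs_sub _ _).trans (by linarith [hSb ω]))).abs
    have hint2 : Integrable (fun ω => |S ω - ∫ ω', S ω' ∂μ|) μ :=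
      (int_bdd μ (hSmeas.sub measurable_const) (C := c * (M * Kmax) + |∫ ω', S ω' ∂μ|)
        (fun ω => (abs_sub _ _).trans (by linarith [hSb ω]))).abs
    calc ∫ ω, |S ω - p x| ∂μ
        ≤ ∫ ω, (|S ω - ∫ ω', S ω' ∂μ| + |(∫ ω', S ω' ∂μ) - p x|) ∂μ := by
          apply integral_mono hint1 (hint2.add (integrable_const _))
          intro ω
          calc |S ω - p x| = |(S ω - ∫ ω', S ω' ∂μ) + ((∫ ω', S ω' ∂μ) - p x)| := by ring_nf
            _ ≤ _ := abs_add_le _ _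
      _ = (∫ ω, |S ω - ∫ ω', S ω' ∂μ| ∂μ) + |(∫ ω', S ω' ∂μ) - p x| := by
          rw [integral_add hint2 (integrable_const _), integral_const]
          simp
  calc ∫ ω, |S ω - p x| ∂μ
      ≤ (∫ ω, |S ω - ∫ ω', S ω' ∂μ| ∂μ) + |(∫ ω', S ω' ∂μ) - p x| := hfinal
    _ ≤ Kmax / (w ^ d * (2 * Real.sqrt M)) + (L * ∫ u, (∑ k, |u k|) * κ u) * w := by
        apply add_le_add hfluct
        rw [hESJ]
        exact hbias


theorem bad_measure {d N M : ℕ} {Ω : Type} [MeasurableSpace Ω] (μ : Measure Ω)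
    [IsProbabilityMeasure μ]
    (p κ : (Fin d → ℝ) → ℝ)
    (hp0 : ∀ x, 0 ≤ p x) (hpmeas : Measurable p)
    (hpsupp : ∀ x, x ∉ Set.Icc (0 : Fin d → ℝ) 1 → p x = 0)
    (hκmeas : Measurable κ)
    (Kmax : ℝ) (hκabs : ∀ x, |κ x| ≤ Kmax)
    (hN : 0 < N) (hM : 0 < M)
    (X : Fin N → Ω → (Fin d → ℝ)) (X' : Fin M → Ω → (Fin d → ℝ))
    (hXmeas : ∀ n, Measurable (X n)) (hX'meas : ∀ m, Measurable (X' m))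
    (hXlaw : ∀ n, Measure.map (X n) μ = volume.withDensity fun x => ENNReal.ofReal (p x))
    (hindep : iIndepFun (Sum.elim X X') μ)
    (w : ℝ) (hw : 0 < w) (n : Fin N)
    (τ A c₀ : ℝ) (hτpos : 0 < τ) (hc₀pos : 0 < c₀)
    (hexp : ∀ x : Fin d → ℝ, ∫ ω, |parzen w κ X' x ω - p x| ∂μ ≤ A)
    (hAτ : A ≤ τ * c₀) :
    μ {ω | τ * p (X n ω) < |parzen w κ X' (X n ω) ω - p (X n ω)|}
      ≤ ENNReal.ofReal c₀ := by
  classical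
  have hwd : (0:ℝ) < w ^ d := pow_pos hw d
  set Xv : Ω → (Fin M → (Fin d → ℝ)) := fun ω m => X' m ω with hXv
  have hXvmeas : Measurable Xv := measurable_pi_lambda _ fun m => hX'meas m
  -- independence of X n and the tuple X'
  have hIndep : IndepFun (X n) Xv μ := by
    have hmeas : ∀ i, Measurable (Sum.elim X X' i) := by
      rintro (i|i); exacts [hXmeas i, hX'meas i]
    have h := hindep.indepFun_finset {Sum.inl n} (Finset.univ.image Sum.inr)
      (by simp) hmeas
    exact h.comp (φ := fun v => v ⟨Sum.inl n, Finset.mem_singleton_self _⟩)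
      (ψ := fun v m => v ⟨Sum.inr m, Finset.mem_image_of_mem _ (Finset.mem_univ m)⟩)
      (_mγ := inferInstance) (_mγ' := inferInstance)
      (measurable_pi_apply _) (measurable_pi_lambda _ fun m => measurable_pi_apply _)
  set ν : Measure (Fin d → ℝ) := Measure.map (X n) μ with hν
  set π : Measure (Fin M → (Fin d → ℝ)) := Measure.map Xv μ with hπ
  have : IsProbabilityMeasure ν := Measure.isProbabilityMeasure_map (hXmeas n).aemeasurable
  have : IsProbabilityMeasure π := Measure.isProbabilityMeasure_map hXvmeas.aemeasurable
  set g : (Fin d → ℝ) × (Fin M → (Fin d → ℝ)) → ℝ :=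
    fun z => (1 / ((M : ℝ) * w ^ d)) * ∑ m, κ (w⁻¹ • (z.1 - z.2 m)) with hg
  have hgmeas : Measurable g := by
    apply Measurable.const_mul
    apply Finset.measurable_sum
    intro m _
    exact hκmeas.comp (by fun_prop : Measurable fun z :
      (Fin d → ℝ) × (Fin M → Fin d → ℝ) => w⁻¹ • (z.1 - z.2 m))
  set B : Set ((Fin d → ℝ) × (Fin M → (Fin d → ℝ))) := {z | τ * p z.1 < |g z - p z.1|} with hB
  have hBmeas : MeasurableSet B :=
    measurableSet_lt (measurable_const.mul (hpmeas.comp measurable_fst))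
      ((hgmeas.sub (hpmeas.comp measurable_fst)).abs)
  set pair : Ω → (Fin d → ℝ) × (Fin M → (Fin d → ℝ)) := fun ω => (X n ω, Xv ω) with hpair
  have hpairmeas : Measurable pair := (hXmeas n).prodMk hXvmeas
  have hkey : {ω | τ * p (X n ω) < |parzen w κ X' (X n ω) ω - p (X n ω)|}
      = pair ⁻¹' B := rfl
  have hmapeq : Measure.map pair μ = ν.prod π :=
    (indepFun_iff_map_prod_eq_prod_map_map (hXmeas n).aemeasurable
      hXvmeas.aemeasurable).mp hIndep
  have h1 : μ (pair ⁻¹' B) = (ν.prod π) B := by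
    rw [← Measure.map_apply hpairmeas hBmeas, hmapeq]
  have h2 : (ν.prod π) B = ∫⁻ x, π (Prod.mk x ⁻¹' B) ∂ν := Measure.prod_apply hBmeas
  -- a.e. positivity of p under ν
  have haepos : ∀ᵐ x ∂ν, 0 < p x := by
    rw [hν, hXlaw n]
    have h0 : (volume.withDensity fun x => ENNReal.ofReal (p x)) {x | p x ≤ 0} = 0 :=
      density_zero_null p hpmeas
    filter_upwards [measure_eq_zero_iff_ae_notMem.mp h0] with x hx
    exact lt_of_le_of_ne (hp0 x) (fun h => hx (le_of_eq h.symm))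
  -- pointwise bound
  have hptwise : ∀ᵐ x ∂ν, π (Prod.mk x ⁻¹' B) ≤ ENNReal.ofReal (c₀ / p x) := by
    filter_upwards [haepos] with x hx
    have hπx : π (Prod.mk x ⁻¹' B) = μ {ω | τ * p x < |parzen w κ X' x ω - p x|} := by
      rw [hπ, Measure.map_apply hXvmeas (measurable_prodMk_left hBmeas)]
      rfl
    rw [hπx]
    have hSmeas : Measurable (fun ω => parzen w κ X' x ω) := by
      apply Measurable.const_mul
      apply Finset.measurable_sum
      intro m _
      exact hκmeas.comp ((measurable_const.sub (hX'meas m)).const_smul w⁻¹)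
    have hSb : ∀ ω, |parzen w κ X' x ω - p x|
        ≤ (1 / ((M:ℝ) * w ^ d)) * ((M:ℝ) * Kmax) + |p x| := by
      intro ω
      have h3 : |parzen w κ X' x ω| ≤ (1 / ((M:ℝ) * w ^ d)) * ((M:ℝ) * Kmax) := by
        rw [parzen, abs_mul]
        have hM' : (0:ℝ) < (M:ℝ) := Nat.cast_pos.mpr hM
        have hc : |1 / ((M:ℝ) * w ^ d)| = 1 / ((M:ℝ) * w ^ d) := abs_of_pos (by positivity)
        rw [hc]
        apply mul_le_mul_of_nonneg_left _ (by positivity)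
        calc |∑ m, κ (w⁻¹ • (x - X' m ω))| ≤ ∑ m, |κ (w⁻¹ • (x - X' m ω))| :=
              Finset.abs_sum_le_sum_abs _ _
          _ ≤ ∑ _m : Fin M, Kmax := Finset.sum_le_sum fun m _ => hκabs _
          _ = (M:ℝ) * Kmax := by simp [mul_comm]
      calc |parzen w κ X' x ω - p x| ≤ |parzen w κ X' x ω| + |p x| := abs_sub _ _
        _ ≤ _ := by linarith
    have hmark := markov_bdd μ (f := fun ω => |parzen w κ X' x ω - p x|)
      (fun ω => abs_nonneg _)
      ((int_bdd μ (hSmeas.sub measurable_const)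
        (fun ω => by simpa using hSb ω)).abs)
      (t := τ * p x) (by positivity) (hexp x)
    refine hmark.trans (ENNReal.ofReal_le_ofReal ?_)
    rw [div_le_div_iff₀ (by positivity) hx]
    have h4 := mul_le_mul_of_nonneg_right hAτ (hp0 x)
    nlinarith
  rw [hkey, h1, h2]
  calc ∫⁻ x, π (Prod.mk x ⁻¹' B) ∂ν ≤ ∫⁻ x, ENNReal.ofReal (c₀ / p x) ∂ν :=
        lintegral_mono_ae hptwise
    _ ≤ ENNReal.ofReal c₀ := by
        rw [hν, hXlaw n]
        rw [lintegral_withDensity_eq_lintegral_mul _ hpmeas.ennreal_ofReal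
          (g := fun x => ENNReal.ofReal (c₀ / p x))
          ((measurable_const.div hpmeas).ennreal_ofReal)]
        calc ∫⁻ x, ((fun x => ENNReal.ofReal (p x)) * fun x => ENNReal.ofReal (c₀ / p x)) x
              ≤ ∫⁻ x, (Set.Icc (0 : Fin d → ℝ) 1).indicator (fun _ => ENNReal.ofReal c₀) x := by
              apply lintegral_mono
              intro x
              simp only [Pi.mul_apply]
              rcases lt_or_ge 0 (p x) with hx | hx
              · have hxIcc : x ∈ Set.Icc (0 : Fin d → ℝ) 1 := by
                  by_contra hc
                  rw [hpsupp x hc] at hx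
                  exact lt_irrefl _ hx
                rw [Set.indicator_of_mem hxIcc, ← ENNReal.ofReal_mul (hp0 x)]
                apply ENNReal.ofReal_le_ofReal
                rw [mul_div_cancel₀ _ (ne_of_gt hx)]
              · have : p x = 0 := le_antisymm hx (hp0 x)
                simp [this]
          _ = ENNReal.ofReal c₀ := by
              rw [lintegral_indicator_const measurableSet_Icc]
              rw [Real.volume_Icc_pi]
              simp

end KnifeAux

/-- **Lemma (uniform plug-in error bound).** For `p ∈ 𝒫_L`, a kernel density `κ` supported
on `[0,1]ᵈ` with constants `C₂` and `K_max` finite, i.i.d. samples `X'₁, …, X'_M ∼ p` and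
`X₁, …, X_N ∼ p` independent of each other, a bandwidth `w > 0`, and `δ > 0` such that
`1 - (3 N K_max/(wᵈ δ)) √(log(6N/δ)/(2M)) - 3 N C₂ w/δ > 0`, with probability greater than
`1 - 2δ/3` it holds that `|Ĥ(𝒟; w) + (1/N) ∑ₙ log p(Xₙ)| ≤
-log(1 - (3 N K_max/(wᵈ δ)) √(log(6N/δ)/(2M)) - 3 N C₂ w/δ)`. -/

theorem knife_empirical_sum_bound {d : ℕ} (L δ : ℝ) (hL : 0 < L) (hδ : 0 < δ)
    (p κ : (Fin d → ℝ) → ℝ)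
    (hp0 : ∀ x, 0 ≤ p x) (hpmeas : Measurable p)
    (hpsupp : ∀ x, x ∉ Set.Icc (0 : Fin d → ℝ) 1 → p x = 0)
    (hpint : ∫ x, p x = 1)
    (hLip : ∀ x y, |p x - p y| ≤ L * ∑ k, |x k - y k|)
    (hκ0 : ∀ x, 0 ≤ κ x) (hκmeas : Measurable κ)
    (hκsupp : ∀ x, x ∉ Set.Icc (0 : Fin d → ℝ) 1 → κ x = 0)
    (hκint : ∫ x, κ x = 1)
    (C₂ : ℝ) (hC₂int : Integrable fun u => (∑ k, |u k|) * κ u)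
    (hC₂ : C₂ = L * ∫ u, (∑ k, |u k|) * κ u)
    (Kmax : ℝ) (hKmax : IsGreatest (κ '' Set.Icc (0 : Fin d → ℝ) 1) Kmax)
    (Ω : Type) [MeasurableSpace Ω] (μ : Measure Ω) [IsProbabilityMeasure μ]
    (N M : ℕ) (hN : 0 < N) (hM : 0 < M)
    (X : Fin N → Ω → (Fin d → ℝ)) (X' : Fin M → Ω → (Fin d → ℝ))
    (hXmeas : ∀ n, Measurable (X n)) (hX'meas : ∀ m, Measurable (X' m))
    (hindep : iIndepFun (Sum.elim X X') μ)
    (hXlaw : ∀ n, Measure.map (X n) μ = volume.withDensity fun x => ENNReal.ofReal (p x))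
    (hX'law : ∀ m, Measure.map (X' m) μ = volume.withDensity fun x => ENNReal.ofReal (p x))
    (w : ℝ) (hw : 0 < w)
    (hpos : 0 < 1 - 3 * N * Kmax / (w ^ d * δ) * Real.sqrt (Real.log (6 * N / δ) / (2 * M))
        - 3 * N * C₂ * w / δ) :
    1 - 2 * δ / 3 <
      (μ {ω | |entropyEstimate w κ X X' ω + (1 / N : ℝ) * ∑ n, Real.log (p (X n ω))| ≤
        -Real.log (1 - 3 * N * Kmax / (w ^ d * δ) * Real.sqrt (Real.log (6 * N / δ) / (2 * M))
          - 3 * N * C₂ * w / δ)}).toReal := by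
  classical
  rcases lt_or_ge (3/2 : ℝ) δ with hδ32 | hδ32
  · have h0 : 1 - 2 * δ / 3 < 0 := by linarith
    exact lt_of_lt_of_le h0 ENNReal.toReal_nonneg
  set τ₁ : ℝ := 3 * N * Kmax / (w ^ d * δ) *
    Real.sqrt (Real.log (6 * N / δ) / (2 * M)) with hτ₁
  set τ₂ : ℝ := 3 * N * C₂ * w / δ with hτ₂
  set τ : ℝ := τ₁ + τ₂ with hτ
  have hN' : (0:ℝ) < N := Nat.cast_pos.mpr hN
  have hM' : (0:ℝ) < M := Nat.cast_pos.mpr hM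
  have hwd : (0:ℝ) < w ^ d := pow_pos hw d
  have hκInt : Integrable κ volume := by
    by_contra h
    rw [MeasureTheory.integral_undef h] at hκint
    norm_num at hκint
  have hKmax0 : 0 ≤ Kmax := by
    obtain ⟨⟨x0, _, hx0e⟩, _⟩ := hKmax
    exact hx0e ▸ hκ0 x0
  have hκle : ∀ x, κ x ≤ Kmax := fun x => by
    by_cases hx : x ∈ Set.Icc (0 : Fin d → ℝ) 1
    · exact hKmax.2 ⟨x, hx, rfl⟩
    · rw [hκsupp x hx]; exact hKmax0
  have hκabs : ∀ x, |κ x| ≤ Kmax := fun x => by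
    rw [abs_of_nonneg (hκ0 x)]; exact hκle x
  have hKmaxpos : 0 < Kmax := by
    rcases eq_or_lt_of_le hKmax0 with h0 | h
    · exfalso
      have hzero : κ = fun _ => (0:ℝ) := funext fun x =>
        le_antisymm (by rw [h0]; exact hκle x) (hκ0 x)
      rw [hzero] at hκint
      simp at hκint
    · exact h
  have hC₂0 : 0 ≤ C₂ := by
    rw [hC₂]
    exact mul_nonneg hL.le (integral_nonneg fun u =>
      mul_nonneg (Finset.sum_nonneg fun k _ => abs_nonneg _) (hκ0 u))
  have hlog : (1/2 : ℝ) ≤ Real.log (6 * N / δ) := by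
    have hN1 : (1:ℝ) ≤ N := by exact_mod_cast hN
    have h6N : (4:ℝ) ≤ 6 * N / δ := by
      rw [le_div_iff₀ hδ]
      nlinarith
    calc (1/2:ℝ) ≤ Real.log 4 := by
          rw [Real.le_log_iff_exp_le (by norm_num)]
          have h1 := Real.exp_one_lt_d9
          have h2 : Real.exp (1/2) ≤ Real.exp 1 := Real.exp_le_exp.mpr (by norm_num)
          nlinarith
      _ ≤ Real.log (6 * N / δ) := Real.log_le_log (by norm_num) h6N
  have hsqM : (Real.sqrt M)^2 = (M:ℝ) := Real.sq_sqrt (Nat.cast_nonneg M)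
  have hsqM0 : 0 < Real.sqrt M := Real.sqrt_pos.mpr hM'
  have hR0 : (0:ℝ) ≤ Real.log (6 * N / δ) / (2 * M) :=
    div_nonneg (le_trans (by norm_num) hlog) (by positivity)
  have hsqrt : 1/(2*Real.sqrt M) ≤ Real.sqrt (Real.log (6 * N / δ) / (2 * M)) := by
    rw [Real.le_sqrt (by positivity) hR0]
    have heq : (1/(2*Real.sqrt M))^2 = 1/(4*M) := by
      rw [div_pow, mul_pow, hsqM]; norm_num
    rw [heq, div_le_div_iff₀ (by positivity) (by positivity)]
    nlinarith
  have hsq0 : 0 < Real.sqrt (Real.log (6 * N / δ) / (2 * M)) :=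
    lt_of_lt_of_le (by positivity) hsqrt
  set A : ℝ := Kmax / (w ^ d * (2 * Real.sqrt M)) + C₂ * w with hA
  set c₀ : ℝ := δ / (3 * N) with hc₀
  have hc₀pos : 0 < c₀ := by rw [hc₀]; positivity
  have hτ₁pos : 0 < τ₁ := by
    rw [hτ₁]
    apply mul_pos (div_pos (by positivity) (by positivity)) hsq0
  have hτ₂0 : 0 ≤ τ₂ := by
    rw [hτ₂]
    positivity
  have hτpos : 0 < τ := by rw [hτ]; linarith
  have hτlt1 : τ < 1 := by rw [hτ]; linarith [hpos]
  have hAτ : A ≤ τ * c₀ := by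
    have h1 : τ₁ * c₀ = Kmax / w ^ d * Real.sqrt (Real.log (6 * N / δ) / (2 * M)) := by
      rw [hτ₁, hc₀]
      field_simp
    have h2 : τ₂ * c₀ = C₂ * w := by
      rw [hτ₂, hc₀]
      field_simp
    have h3 : Kmax / (w ^ d * (2 * Real.sqrt M))
        = Kmax / w ^ d * (1/(2*Real.sqrt M)) := by
      field_simp
    have h4 : Kmax / w ^ d * (1/(2*Real.sqrt M))
        ≤ Kmax / w ^ d * Real.sqrt (Real.log (6 * N / δ) / (2 * M)) :=
      mul_le_mul_of_nonneg_left hsqrt (by positivity)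
    calc A = Kmax / (w ^ d * (2 * Real.sqrt M)) + C₂ * w := hA
      _ ≤ Kmax / w ^ d * Real.sqrt (Real.log (6 * N / δ) / (2 * M)) + C₂ * w := by
          rw [h3]; linarith
      _ = τ₁ * c₀ + τ₂ * c₀ := by rw [h1, h2]
      _ = τ * c₀ := by rw [hτ]; ring
  -- expected deviation bound
  have hexp : ∀ x : Fin d → ℝ, ∫ ω, |parzen w κ X' x ω - p x| ∂μ ≤ A := by
    intro x
    have hYindep : ∀ m m', m ≠ m' → IndepFun (fun ω => κ (w⁻¹ • (x - X' m ω)))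
        (fun ω => κ (w⁻¹ • (x - X' m' ω))) μ := by
      intro m m' hmm'
      have hii := hindep.indepFun (i := Sum.inr m) (j := Sum.inr m') (by simpa using hmm')
      have hsm : Measurable fun v : Fin d → ℝ => κ (w⁻¹ • (x - v)) :=
        hκmeas.comp ((measurable_const.sub measurable_id).const_smul w⁻¹)
      exact hii.comp hsm hsm
    have h := KnifeAux.exp_dev μ L hL p κ hp0 hpmeas hLip hκ0 hκmeas hκsupp hκInt hκint
      hC₂int Kmax hKmax0 hκle hM X' hX'meas hX'law w hw x hYindep
    rw [hA, hC₂]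
    exact h
  -- the bad events
  set bad : Fin N → Set Ω := fun n =>
    {ω | τ * p (X n ω) < |parzen w κ X' (X n ω) ω - p (X n ω)|} with hbad
  have hbadμ : ∀ n, μ (bad n) ≤ ENNReal.ofReal c₀ := fun n =>
    KnifeAux.bad_measure μ p κ hp0 hpmeas hpsupp hκmeas Kmax hκabs hN hM X X' hXmeas
      hX'meas hXlaw hindep w hw n τ A c₀ hτpos hc₀pos hexp hAτ
  have hbadmeas : ∀ n, MeasurableSet (bad n) := by
    intro n
    have hSn : Measurable fun ω => parzen w κ X' (X n ω) ω := by
      have heq : (fun ω => parzen w κ X' (X n ω) ω)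
          = fun ω => (1/((M:ℝ)*w^d)) * ∑ m, κ (w⁻¹ • (X n ω - X' m ω)) := rfl
      rw [heq]
      exact measurable_const.mul (Finset.measurable_sum _ fun m _ =>
        hκmeas.comp (by fun_prop : Measurable fun ω => w⁻¹ • (X n ω - X' m ω)))
    exact measurableSet_lt (measurable_const.mul (hpmeas.comp (hXmeas n)))
      ((hSn.sub (hpmeas.comp (hXmeas n))).abs)
  have hUnion : μ (⋃ n, bad n) ≤ ENNReal.ofReal (δ/3) := by
    calc μ (⋃ n, bad n) ≤ ∑' n, μ (bad n) := measure_iUnion_le _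
      _ = ∑ n, μ (bad n) := tsum_fintype _
      _ ≤ ∑ _n : Fin N, ENNReal.ofReal c₀ := Finset.sum_le_sum fun n _ => hbadμ n
      _ = (N : ℝ≥0∞) * ENNReal.ofReal c₀ := by
          rw [Finset.sum_const, Finset.card_univ, Fintype.card_fin, nsmul_eq_mul]
      _ = ENNReal.ofReal (δ/3) := by
          rw [← ENNReal.ofReal_natCast N, ← ENNReal.ofReal_mul (Nat.cast_nonneg N)]
          congr 1
          rw [hc₀]
          field_simp
  -- good event implies the bound
  have hcompl : (⋃ n, bad n)ᶜ ⊆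
      {ω | |entropyEstimate w κ X X' ω + (1 / N : ℝ) * ∑ n, Real.log (p (X n ω))| ≤
        -Real.log (1 - τ₁ - τ₂)} := by
    intro ω hω
    simp only [Set.mem_compl_iff, Set.mem_iUnion, not_exists] at hω
    have hgood : ∀ n, |parzen w κ X' (X n ω) ω - p (X n ω)| ≤ τ * p (X n ω) := by
      intro n
      have := hω n
      rw [hbad] at this
      exact not_lt.mp this
    have hlogn : ∀ n, |Real.log (p (X n ω)) - Real.log (parzen w κ X' (X n ω) ω)|
        ≤ -Real.log (1 - τ) := fun n =>
      KnifeAux.log_ratio_bound hτpos.le hτlt1 (hp0 _) (hgood n)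
    have h1τ : 1 - τ₁ - τ₂ = 1 - τ := by rw [hτ]; ring
    simp only [Set.mem_setOf_eq]
    rw [h1τ]
    have hsum : entropyEstimate w κ X X' ω + (1 / N : ℝ) * ∑ n, Real.log (p (X n ω))
        = (1 / N : ℝ) * ∑ n, (Real.log (p (X n ω))
            - Real.log (parzen w κ X' (X n ω) ω)) := by
      rw [entropyEstimate, Finset.sum_sub_distrib, mul_sub]
      ring
    rw [hsum]
    calc |(1 / N : ℝ) * ∑ n, (Real.log (p (X n ω))
            - Real.log (parzen w κ X' (X n ω) ω))|
        = (1 / N : ℝ) * |∑ n, (Real.log (p (X n ω))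
            - Real.log (parzen w κ X' (X n ω) ω))| := by
          rw [abs_mul, abs_of_nonneg (by positivity : (0:ℝ) ≤ 1 / N)]
      _ ≤ (1 / N : ℝ) * ∑ n, |Real.log (p (X n ω))
            - Real.log (parzen w κ X' (X n ω) ω)| :=
          mul_le_mul_of_nonneg_left (Finset.abs_sum_le_sum_abs _ _) (by positivity)
      _ ≤ (1 / N : ℝ) * ∑ _n : Fin N, -Real.log (1 - τ) :=
          mul_le_mul_of_nonneg_left (Finset.sum_le_sum fun n _ => hlogn n) (by positivity)
      _ = -Real.log (1 - τ) := by
          rw [Finset.sum_const, Finset.card_univ, Fintype.card_fin, nsmul_eq_mul]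
          field_simp
  -- final arithmetic
  have hμsub : μ ((⋃ n, bad n)ᶜ) ≤
      μ {ω | |entropyEstimate w κ X X' ω + (1 / N : ℝ) * ∑ n, Real.log (p (X n ω))| ≤
        -Real.log (1 - τ₁ - τ₂)} := measure_mono hcompl
  have hmeasU : MeasurableSet (⋃ n, bad n) := MeasurableSet.iUnion hbadmeas
  have hcomplμ : μ ((⋃ n, bad n)ᶜ) = 1 - μ (⋃ n, bad n) :=
    prob_compl_eq_one_sub hmeasU
  have hUfin : μ (⋃ n, bad n) ≤ 1 := prob_le_one
  have h5 : (μ ((⋃ n, bad n)ᶜ)).toReal = 1 - (μ (⋃ n, bad n)).toReal := by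
    rw [hcomplμ, ENNReal.toReal_sub_of_le hUfin (by simp)]
    simp
  have h6 : (μ (⋃ n, bad n)).toReal ≤ δ/3 := by
    have h := ENNReal.toReal_mono ENNReal.ofReal_ne_top hUnion
    rwa [ENNReal.toReal_ofReal (by positivity)] at h
  have h7 : (μ ((⋃ n, bad n)ᶜ)).toReal ≤
      (μ {ω | |entropyEstimate w κ X X' ω + (1 / N : ℝ) * ∑ n, Real.log (p (X n ω))| ≤
        -Real.log (1 - τ₁ - τ₂)}).toReal :=
    ENNReal.toReal_mono (measure_ne_top μ _) hμsub
  have h8 : 1 - 2 * δ / 3 < 1 - δ/3 := by linarith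
  linarith [h5, h6, h7, h8]
end
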